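/- arXiv:1701.04183 — 2 statements merged into one kernel-verified Lean document; each statement's English description precedes it below -/
import Mathlib

section
/- Let C be an additive even self-dual (n, 2^n) code over GF(4) (C = C^⊥ under the trace inner product, all codewords have even weight) whose minimum weight d satisfies d ≥ (n+2)/3. Then the supports of codewords of each nonzero weight hold a 1-design with possibly repeated blocks: for every w with 0 < w ≤ n, the number of codewords c ∈ C with wt(c) = w and cᵢ ≠ 0 is the same for every coordinate i ∈ {0, …, n−1}. -/
/-- `GF(4)`, the field with 4 elements. -/
abbrev F4 := GaloisField 2 2

/-- The trace map `Tr : GF(4) → GF(2)`, `Tr(x) = x + x²` (valued in the prime subfield). -/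
noncomputable def tr (x : F4) : F4 := x + x ^ 2

/-- The conjugate `ȳ = y²` of an element of `GF(4)`. -/
noncomputable def conj (x : F4) : F4 := x ^ 2

/-- The Hamming weight: the number of nonzero coordinates. -/
noncomputable def wt {n : ℕ} (c : Fin n → F4) : ℕ := {i | c i ≠ 0}.ncard

/-- The trace dual of a code: all vectors whose trace inner product with every
codeword is zero. -/
def traceDual {n : ℕ} (C : Set (Fin n → F4)) : Set (Fin n → F4) :=
  {x | ∀ c ∈ C, ∑ i, tr (x i * conj (c i)) = 0}



open Polynomial Finset
open scoped Classical

noncomputable instance : Fintype F4 := Fintype.ofFinite _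

lemma F4_card : Fintype.card F4 = 4 := by
  rw [← Nat.card_eq_fintype_card, GaloisField.card 2 2 (by norm_num)]; norm_num

lemma F4_pow4 (a : F4) : a ^ 4 = a := by
  have := FiniteField.pow_card a
  rwa [F4_card] at this

lemma F4_add_self (a : F4) : a + a = 0 := by
  have : (2 : F4) = 0 := by exact_mod_cast CharP.cast_eq_zero F4 2
  linear_combination a * this

lemma F4_frob (a b : F4) : (a+b)^2 = a^2+b^2 := by rw [add_pow_char]

lemma tr_add (a b : F4) : tr (a + b) = tr a + tr b := by
  unfold tr; rw [F4_frob]; ring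

lemma tr01 (t : F4) : tr t = 0 ∨ tr t = 1 := by
  have h : tr t ^ 2 = tr t := by
    unfold tr
    rw [F4_frob, ← pow_mul]
    have : t ^ (2*2) = t := by norm_num [F4_pow4]
    rw [this]; ring
  have h2 : tr t * (tr t - 1) = 0 := by linear_combination h - tr t
  rcases mul_eq_zero.1 h2 with h | h
  · left; exact h
  · right; linear_combination h

lemma conj_add (a b : F4) : conj (a + b) = conj a + conj b := by
  unfold conj; rw [F4_frob]

lemma conj_zero : conj 0 = 0 := by unfold conj; ring

lemma conj_ne_zero {b : F4} (hb : b ≠ 0) : conj b ≠ 0 := by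
  unfold conj; exact pow_ne_zero _ hb

lemma exists_tr_one : ∃ t : F4, tr t = 1 := by
  by_contra h
  push_neg at h
  have h0 : ∀ t : F4, tr t = 0 := fun t => (tr01 t).resolve_right (h t)
  have key : ∀ t : F4, t = 0 ∨ t = 1 := by
    intro t
    have := h0 t
    unfold tr at this
    have ht : t * (t - 1) = 0 := by
      have hneg : t ^ 2 = t := by
        have h2 := F4_add_self t
        linear_combination this - h2
      linear_combination hneg - t
    rcases mul_eq_zero.1 ht with h | h
    · exact Or.inl h
    · exact Or.inr (by linear_combination h)
  have : (Finset.univ : Finset F4) ⊆ {0, 1} := by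
    intro t _
    rcases key t with h | h <;> simp [h]
  have hle := Finset.card_le_card this
  rw [Finset.card_univ, F4_card] at hle
  have : ({0, 1} : Finset F4).card ≤ 2 := Finset.card_insert_le _ _ |>.trans (by simp)
  omega

lemma exists_pair_tr_one {b : F4} (hb : b ≠ 0) : ∃ a : F4, tr (a * conj b) = 1 := by
  obtain ⟨t, ht⟩ := exists_tr_one
  exact ⟨t * (conj b)⁻¹, by rw [mul_assoc, inv_mul_cancel₀ (conj_ne_zero hb), mul_one, ht]⟩

noncomputable def chi (t : F4) : ℚ[X] := if t = 0 then 1 else -1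

lemma F4_one_ne_zero : (1 : F4) ≠ 0 := one_ne_zero

lemma chi_zero : chi 0 = 1 := by simp [chi]
lemma chi_one : chi 1 = -1 := by simp [chi, F4_one_ne_zero]

lemma chi_add_one {s : F4} (hs : s = 0 ∨ s = 1) : chi (s + 1) = - chi s := by
  rcases hs with h | h <;> subst h
  · simp [chi, F4_one_ne_zero]
  · have : (1 : F4) + 1 = 0 := F4_add_self 1
    rw [this, chi_zero, chi_one]; ring

lemma chi_add {s t : F4} (hs : s = 0 ∨ s = 1) (ht : t = 0 ∨ t = 1) :
    chi (s + t) = chi s * chi t := by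
  rcases ht with h | h <;> subst h
  · rw [add_zero, chi_zero, mul_one]
  · rw [chi_add_one hs, chi_one]; ring

/-- sum over whole field of chi of tr(a * conj b) for b ≠ 0 is zero. -/
lemma sum_chi_eq_zero {b : F4} (hb : b ≠ 0) :
    ∑ a : F4, chi (tr (a * conj b)) = 0 := by
  obtain ⟨a0, ha0⟩ := exists_pair_tr_one hb
  have key : ∑ a : F4, chi (tr (a * conj b)) = ∑ a : F4, chi (tr ((a + a0) * conj b)) :=
    (Fintype.sum_equiv (Equiv.addRight a0) _ _ (fun a => rfl)).symm
  have step : ∀ a : F4, chi (tr ((a + a0) * conj b)) = - chi (tr (a * conj b)) := by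
    intro a
    have : tr ((a + a0) * conj b) = tr (a * conj b) + 1 := by
      rw [add_mul, tr_add, ha0]
    rw [this, chi_add_one (tr01 _)]
  rw [Finset.sum_congr rfl (fun a _ => step a)] at key
  have h2 : (2 : ℚ[X]) * ∑ a : F4, chi (tr (a * conj b)) = 0 := by
    rw [Finset.sum_neg_distrib] at key
    linear_combination key
  have := mul_eq_zero.1 h2
  rcases this with h | h
  · exact absurd h (by norm_num)
  · exact h

/-- chi of a {0,1}-valued finite sum is the product of chis. -/
lemma chi_sum_eq_prod {ι : Type*} (s : Finset ι) (g : ι → F4)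
    (h : ∀ i ∈ s, g i = 0 ∨ g i = 1) :
    ((∑ i ∈ s, g i) = 0 ∨ (∑ i ∈ s, g i) = 1) ∧
      chi (∑ i ∈ s, g i) = ∏ i ∈ s, chi (g i) := by
  induction s using Finset.cons_induction with
  | empty => simp [chi_zero]
  | cons a s ha ih =>
    have hg := h a (Finset.mem_cons_self a s)
    obtain ⟨ih1, ih2⟩ := ih (fun i hi => h i (Finset.mem_cons_of_mem hi))
    rw [Finset.sum_cons, Finset.prod_cons]
    constructor
    · rcases hg with h1 | h1 <;> rcases ih1 with h2 | h2 <;> rw [h1, h2] <;> simp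
      exact F4_add_self 1
    · rw [chi_add hg ih1, ih2]

variable {n : ℕ}

noncomputable def ph (x c : Fin n → F4) : F4 := ∑ i, tr (x i * conj (c i))

lemma ph01 (x c : Fin n → F4) : ph x c = 0 ∨ ph x c = 1 :=
  (chi_sum_eq_prod univ _ (fun i _ => tr01 _)).1

lemma chi_ph (x c : Fin n → F4) : chi (ph x c) = ∏ i, chi (tr (x i * conj (c i))) :=
  (chi_sum_eq_prod univ _ (fun i _ => tr01 _)).2

lemma ph_add (x c c' : Fin n → F4) : ph x (c + c') = ph x c + ph x c' := by
  unfold ph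
  rw [← Finset.sum_add_distrib]
  refine Finset.sum_congr rfl fun i _ => ?_
  simp only [Pi.add_apply]
  rw [conj_add, mul_add, tr_add]

lemma orth (C : AddSubgroup (Fin n → F4))
    (hselfdual : (C : Set (Fin n → F4)) = traceDual (C : Set (Fin n → F4)))
    (x : Fin n → F4) :
    ∑ c ∈ univ.filter (· ∈ C), chi (ph x c) =
      if x ∈ C then ((univ.filter (· ∈ C) : Finset (Fin n → F4)).card : ℚ[X]) else 0 := by
  by_cases hx : x ∈ C
  · rw [if_pos hx]
    have hz : ∀ c ∈ univ.filter (· ∈ C), chi (ph x c) = 1 := by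
      intro c hc
      rw [Finset.mem_filter] at hc
      have hx' : x ∈ traceDual (C : Set (Fin n → F4)) := hselfdual ▸ hx
      have : ph x c = 0 := hx' c hc.2
      rw [this, chi_zero]
    rw [Finset.sum_congr rfl hz, Finset.sum_const, nsmul_eq_mul, mul_one]
  · rw [if_neg hx]
    have hx' : x ∉ traceDual (C : Set (Fin n → F4)) := by
      intro h
      rw [← hselfdual] at h
      exact hx h
    simp only [traceDual, Set.mem_setOf_eq, not_forall] at hx'
    obtain ⟨c0, hc0C, hc0⟩ := hx'
    have hph : ph x c0 = 1 := (ph01 x c0).resolve_left hc0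
    have hmem : ∀ c ∈ univ.filter (· ∈ C), c + c0 ∈ univ.filter (· ∈ C) := by
      intro c hc
      rw [Finset.mem_filter] at hc ⊢
      exact ⟨Finset.mem_univ _, C.add_mem hc.2 hc0C⟩
    have hinv : ∀ c : Fin n → F4, (c + c0) + c0 = c := by
      intro c; funext i
      simp only [Pi.add_apply]
      rw [add_assoc, F4_add_self, add_zero]
    have key : ∑ c ∈ univ.filter (· ∈ C), chi (ph x c)
        = ∑ c ∈ univ.filter (· ∈ C), chi (ph x (c + c0)) := by
      refine Finset.sum_nbij' (i := fun c => c + c0) (j := fun c => c + c0)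
        ?_ ?_ ?_ ?_ ?_
      · exact hmem
      · exact hmem
      · intro a _; exact hinv a
      · intro a _; exact hinv a
      · intro a _; rw [hinv]
    have step : ∀ c, chi (ph x (c + c0)) = - chi (ph x c) := by
      intro c
      rw [ph_add, hph, chi_add_one (ph01 x c)]
    rw [Finset.sum_congr rfl (fun c _ => step c)] at key
    have h2 : (2 : ℚ[X]) * ∑ c ∈ univ.filter (· ∈ C), chi (ph x c) = 0 := by
      rw [Finset.sum_neg_distrib] at key
      linear_combination key
    rcases mul_eq_zero.1 h2 with h | h
    · exact absurd h (by norm_num)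
    · exact h

lemma tr_zero : tr 0 = 0 := by unfold tr; ring

lemma ite_eq_add (a : F4) (u v : ℚ[X]) :
    (if a = 0 then u else v) = v + (if a = 0 then u - v else 0) := by
  split_ifs <;> ring

lemma g_sum_ind (b : F4) :
    ∑ a : F4, chi (tr (a * conj b)) * (if a = 0 then 1 else 0) = 1 := by
  have : ∀ a : F4, chi (tr (a * conj b)) * (if a = 0 then 1 else 0)
      = if a = 0 then chi (tr (a * conj b)) else 0 := by
    intro a; split_ifs <;> ring
  rw [Finset.sum_congr rfl (fun a _ => this a), Finset.sum_ite_eq' univ (0 : F4)]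
  simp [tr_zero, chi_zero]

lemma g_sum_wt_zero :
    ∑ a : F4, chi (tr (a * conj 0)) * (if a = 0 then 1 else X) = 1 + 3 * X := by
  have h1 : ∀ a : F4, chi (tr (a * conj 0)) * (if a = 0 then 1 else X)
      = X + (if a = 0 then 1 - X else 0) := by
    intro a
    rw [conj_zero, mul_zero, tr_zero, chi_zero, one_mul, ite_eq_add]
  rw [Finset.sum_congr rfl (fun a _ => h1 a), Finset.sum_add_distrib,
    Finset.sum_const, Finset.sum_ite_eq' univ (0 : F4)]
  simp [Finset.card_univ, F4_card]
  ring

lemma g_sum_wt {b : F4} (hb : b ≠ 0) :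
    ∑ a : F4, chi (tr (a * conj b)) * (if a = 0 then 1 else X) = 1 - X := by
  have h1 : ∀ a : F4, chi (tr (a * conj b)) * (if a = 0 then 1 else X)
      = chi (tr (a * conj b)) * X + (if a = 0 then chi (tr (a * conj b)) * (1 - X) else 0) := by
    intro a; split_ifs <;> ring
  rw [Finset.sum_congr rfl (fun a _ => h1 a), Finset.sum_add_distrib,
    ← Finset.sum_mul, sum_chi_eq_zero hb, Finset.sum_ite_eq' univ (0 : F4)]
  simp [tr_zero, chi_zero]

noncomputable def Wt {n : ℕ} (c : Fin n → F4) : ℕ := (Finset.univ.filter (fun k => ¬ c k = 0)).card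

noncomputable def Ff (i : Fin n) (k : Fin n) (a : F4) : ℚ[X] :=
  if k = i then (if a = 0 then 1 else 0) else (if a = 0 then 1 else X)

lemma prod_Ff (i : Fin n) (x : Fin n → F4) :
    ∏ k, Ff i k (x k) = if x i = 0 then X ^ (Wt x) else 0 := by
  rw [← Finset.mul_prod_erase univ _ (Finset.mem_univ i)]
  have hFi : Ff i i (x i) = if x i = 0 then 1 else 0 := by simp [Ff]
  have hrest : ∏ k ∈ univ.erase i, Ff i k (x k)
      = ∏ k ∈ univ.erase i, (if x k = 0 then 1 else X) := by
    refine Finset.prod_congr rfl fun k hk => ?_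
    rw [Finset.mem_erase] at hk
    simp [Ff, hk.1]
  rw [hFi, hrest]
  by_cases hxi : x i = 0
  · rw [if_pos hxi, if_pos hxi, one_mul]
    rw [Finset.prod_ite, Finset.prod_const, Finset.prod_const, one_pow, one_mul]
    congr 1
    rw [Finset.filter_erase]
    rw [Finset.erase_eq_of_notMem (by simp [hxi])]
    rfl
  · rw [if_neg hxi, if_neg hxi, zero_mul]

lemma prod_G (i : Fin n) (c : Fin n → F4) :
    (∏ k, ∑ a : F4, chi (tr (a * conj (c k))) * Ff i k a)
      = (1 + 3*X) ^ (((univ.erase i).filter (fun k => c k = 0)).card)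
        * (1 - X) ^ (((univ.erase i).filter (fun k => ¬ (c k = 0))).card) := by
  rw [← Finset.mul_prod_erase univ _ (Finset.mem_univ i)]
  have h1 : ∑ a : F4, chi (tr (a * conj (c i))) * Ff i i a = 1 := by
    have : ∀ a : F4, Ff i i a = (if a = 0 then 1 else 0) := by intro a; simp [Ff]
    rw [Finset.sum_congr rfl (fun a _ => by rw [this a])]
    exact g_sum_ind _
  have h2 : ∀ k ∈ univ.erase i, (∑ a : F4, chi (tr (a * conj (c k))) * Ff i k a)
      = (if c k = 0 then 1 + 3*X else 1 - X) := by
    intro k hk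
    rw [Finset.mem_erase] at hk
    have hF : ∀ a : F4, Ff i k a = (if a = 0 then 1 else X) := by intro a; simp [Ff, hk.1]
    rw [Finset.sum_congr rfl (fun a _ => by rw [hF a])]
    by_cases hck : c k = 0
    · rw [if_pos hck, hck]; exact g_sum_wt_zero
    · rw [if_neg hck]; exact g_sum_wt hck
  rw [h1, one_mul, Finset.prod_congr rfl h2, Finset.prod_ite, Finset.prod_const,
    Finset.prod_const]

lemma fourierStep (i : Fin n) (c : Fin n → F4) :
    ∑ x : Fin n → F4, chi (ph x c) * ∏ k, Ff i k (x k)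
      = ∏ k, ∑ a : F4, chi (tr (a * conj (c k))) * Ff i k a := by
  rw [Finset.prod_univ_sum]
  rw [Fintype.piFinset_univ]
  refine Finset.sum_congr rfl fun x _ => ?_
  rw [chi_ph, ← Finset.prod_mul_distrib]

lemma master (C : AddSubgroup (Fin n → F4))
    (hselfdual : (C : Set (Fin n → F4)) = traceDual (C : Set (Fin n → F4)))
    (i : Fin n) :
    ((univ.filter (· ∈ C) : Finset (Fin n → F4)).card : ℚ[X])
        * ∑ c ∈ univ.filter (· ∈ C), (if c i = 0 then X ^ (Wt c) else 0)
      = ∑ c ∈ univ.filter (· ∈ C),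
          (1 + 3*X) ^ (((univ.erase i).filter (fun k => c k = 0)).card)
            * (1 - X) ^ (((univ.erase i).filter (fun k => ¬ (c k = 0))).card) := by
  have step1 : ∀ c, (1 + 3*X) ^ (((univ.erase i).filter (fun k => c k = 0)).card)
            * (1 - X) ^ (((univ.erase i).filter (fun k => ¬ (c k = 0))).card)
      = ∑ x : Fin n → F4, chi (ph x c) * ∏ k, Ff i k (x k) := by
    intro c; rw [fourierStep, prod_G]
  rw [Finset.sum_congr rfl (fun c _ => step1 c)]
  rw [Finset.sum_comm]
  have step2 : ∀ x : Fin n → F4,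
      ∑ c ∈ univ.filter (· ∈ C), chi (ph x c) * ∏ k, Ff i k (x k)
        = (if x ∈ C then ((univ.filter (· ∈ C) : Finset (Fin n → F4)).card : ℚ[X]) else 0)
            * ∏ k, Ff i k (x k) := by
    intro x
    rw [← Finset.sum_mul, orth C hselfdual x]
  rw [Finset.sum_congr rfl (fun x _ => step2 x)]
  have step3 : ∀ x : Fin n → F4,
      (if x ∈ C then ((univ.filter (· ∈ C) : Finset (Fin n → F4)).card : ℚ[X]) else 0)
          * ∏ k, Ff i k (x k)
        = if x ∈ C then
            ((univ.filter (· ∈ C) : Finset (Fin n → F4)).card : ℚ[X])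
              * (if x i = 0 then X ^ (Wt x) else 0) else 0 := by
    intro x
    rw [prod_Ff]
    split_ifs <;> ring
  rw [Finset.sum_congr rfl (fun x _ => step3 x)]
  conv_rhs => rw [← Finset.sum_filter]
  rw [← Finset.mul_sum]

lemma two_eq_C_two : (2:ℚ[X]) = Polynomial.C (2:ℚ) :=
  (map_ofNat Polynomial.C 2).symm

lemma one_sub_X_ne_zero : (1 - X : ℚ[X]) ≠ 0 := fun h => by
  simpa using congrArg (Polynomial.eval 0) h

lemma natDegree_one_sub_X : (1 - X : ℚ[X]).natDegree = 1 := by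
  have h : (1 - X : ℚ[X]) = -(X - Polynomial.C 1) := by rw [Polynomial.C_1]; ring
  rw [h, Polynomial.natDegree_neg, Polynomial.natDegree_X_sub_C]

/-- Abstract polynomial core of the Assmus–Mattson style argument. -/
lemma poly_core {α : Type*} (n d : ℕ) (S1 S2 : Finset α) (W Z : α → ℕ)
    (hW1 : ∀ c ∈ S1, d ≤ W c ∧ W c + 1 ≤ n ∧ Even (W c))
    (hW2 : ∀ c ∈ S2, d ≤ W c ∧ W c + 1 ≤ n ∧ Even (W c))
    (hd2 : 2 ≤ d) (hdn : d ≤ n) (hEd : Even d) (h3d : n + 2 ≤ 3 * d)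
    (heq : (2^n : ℚ[X]) * ((∑ c ∈ S1, X ^ W c) - ∑ c ∈ S2, X ^ W c)
         = -(4*X) * (∑ c ∈ S1, (1+3*X)^(Z c - 1) * (1-X)^(W c - 1))
           + (4*X) * (∑ c ∈ S2, (1+3*X)^(Z c - 1) * (1-X)^(W c - 1))) :
    (∑ c ∈ S1, (X:ℚ[X]) ^ W c) = ∑ c ∈ S2, X ^ W c := by
  have hn2 : 2 ≤ n := le_trans hd2 hdn
  set A : ℚ[X] := 1 + 3*X with hA
  set B : ℚ[X] := 1 - X with hB
  set T : ℚ[X] := (∑ c ∈ S1, X ^ (W c - d)) - ∑ c ∈ S2, X ^ (W c - d) with hT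
  set V : ℚ[X] := (∑ c ∈ S1, A ^ (Z c - 1) * B ^ (W c - d))
      - ∑ c ∈ S2, A ^ (Z c - 1) * B ^ (W c - d) with hV
  have hXpow : ∀ (w : ℕ), d ≤ w → (X:ℚ[X]) ^ w = X^d * X^(w-d) := by
    intro w hw; rw [← pow_add]; congr 1; omega
  have hBpow : ∀ (w : ℕ), d ≤ w → (B:ℚ[X]) ^ (w-1) = B^(d-1) * B^(w-d) := by
    intro w hw; rw [← pow_add]; congr 1; omega
  have hfac1 : (∑ c ∈ S1, (X:ℚ[X]) ^ W c) = X^d * ∑ c ∈ S1, X ^ (W c - d) := by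
    rw [Finset.mul_sum]
    exact Finset.sum_congr rfl fun c hc => hXpow _ (hW1 c hc).1
  have hfac2 : (∑ c ∈ S2, (X:ℚ[X]) ^ W c) = X^d * ∑ c ∈ S2, X ^ (W c - d) := by
    rw [Finset.mul_sum]
    exact Finset.sum_congr rfl fun c hc => hXpow _ (hW2 c hc).1
  have hfac3 : (∑ c ∈ S1, A ^ (Z c - 1) * B ^ (W c - 1))
      = B^(d-1) * ∑ c ∈ S1, A ^ (Z c - 1) * B ^ (W c - d) := by
    rw [Finset.mul_sum]
    refine Finset.sum_congr rfl fun c hc => ?_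
    rw [hBpow _ (hW1 c hc).1]; ring
  have hfac4 : (∑ c ∈ S2, A ^ (Z c - 1) * B ^ (W c - 1))
      = B^(d-1) * ∑ c ∈ S2, A ^ (Z c - 1) * B ^ (W c - d) := by
    rw [Finset.mul_sum]
    refine Finset.sum_congr rfl fun c hc => ?_
    rw [hBpow _ (hW2 c hc).1]; ring
  have heq2 : (2^n : ℚ[X]) * (X^d * T) = -(4*X) * (B^(d-1) * V) :=
    calc (2^n : ℚ[X]) * (X^d * T)
        = (2^n : ℚ[X]) * ((X^d * ∑ c ∈ S1, X ^ (W c - d)) - X^d * ∑ c ∈ S2, X ^ (W c - d)) := by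
          rw [hT]; ring
      _ = (2^n : ℚ[X]) * ((∑ c ∈ S1, X ^ W c) - ∑ c ∈ S2, X ^ W c) := by
          rw [hfac1, hfac2]
      _ = -(4*X) * (∑ c ∈ S1, A ^ (Z c - 1) * B ^ (W c - 1))
           + (4*X) * (∑ c ∈ S2, A ^ (Z c - 1) * B ^ (W c - 1)) := heq
      _ = -(4*X) * (B^(d-1) * ∑ c ∈ S1, A ^ (Z c - 1) * B ^ (W c - d))
           + (4*X) * (B^(d-1) * ∑ c ∈ S2, A ^ (Z c - 1) * B ^ (W c - d)) := by
          rw [hfac3, hfac4]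
      _ = -(4*X) * (B^(d-1) * V) := by rw [hV]; ring
  have h2n : (2:ℚ[X])^n = 4 * 2^(n-2) := by
    have h : n = 2 + (n - 2) := by omega
    rw [h, pow_add]
    norm_num
  have hXd : (X:ℚ[X])^d = X * X^(d-1) := by
    have h : d = 1 + (d-1) := by omega
    conv_lhs => rw [h]
    rw [pow_add, pow_one]
  have heq3 : (2^(n-2) : ℚ[X]) * (X^(d-1) * T) = -(B^(d-1) * V) := by
    have h4X : (4 * X : ℚ[X]) ≠ 0 := by
      intro h
      rcases mul_eq_zero.1 h with h | h
      · norm_num at h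
      · exact Polynomial.X_ne_zero h
    apply mul_left_cancel₀ h4X
    calc (4*X) * ((2^(n-2) : ℚ[X]) * (X^(d-1) * T))
        = (2^n : ℚ[X]) * (X^d * T) := by rw [h2n, hXd]; ring
      _ = -(4*X) * (B^(d-1) * V) := heq2
      _ = (4*X) * (-(B^(d-1)*V)) := by ring
  have hcopBX : IsCoprime (B^(d-1)) ((X:ℚ[X])^(d-1)) :=
    IsCoprime.pow ⟨1, 1, by rw [hB]; ring⟩
  have hdvd : B^(d-1) ∣ (X:ℚ[X])^(d-1) * T := by
    have hc2 : IsCoprime (B^(d-1)) ((2:ℚ[X])^(n-2)) := by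
      refine IsCoprime.pow ?_
      exact ⟨0, Polynomial.C (2⁻¹ : ℚ), by
        rw [hB, two_eq_C_two, zero_mul, zero_add, ← Polynomial.C_mul]
        norm_num⟩
    have hdd : B^(d-1) ∣ (2^(n-2) : ℚ[X]) * ((X:ℚ[X])^(d-1) * T) :=
      ⟨-V, by rw [heq3]; ring⟩
    exact hc2.dvd_of_dvd_mul_left hdd
  have hdvdT : B^(d-1) ∣ T := hcopBX.dvd_of_dvd_mul_left hdvd
  obtain ⟨S, hS⟩ := hdvdT
  set σ : ℚ[X] →ₐ[ℚ] ℚ[X] := Polynomial.aeval (-X) with hσ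
  have hP : (∑ c ∈ S1, (X:ℚ[X]) ^ W c) - (∑ c ∈ S2, X ^ W c) = X^d * (B^(d-1) * S) := by
    rw [hfac1, hfac2, ← mul_sub, ← hT, hS]
  have hσP : σ ((∑ c ∈ S1, (X:ℚ[X]) ^ W c) - (∑ c ∈ S2, X ^ W c))
      = (∑ c ∈ S1, (X:ℚ[X]) ^ W c) - (∑ c ∈ S2, X ^ W c) := by
    rw [map_sub, map_sum, map_sum]
    congr 1
    · refine Finset.sum_congr rfl fun c hc => ?_
      rw [map_pow, Polynomial.aeval_X]
      exact (hW1 c hc).2.2.neg_pow X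
    · refine Finset.sum_congr rfl fun c hc => ?_
      rw [map_pow, Polynomial.aeval_X]
      exact (hW2 c hc).2.2.neg_pow X
  have hσB : σ B = 1 + X := by
    rw [hB, map_sub, map_one, Polynomial.aeval_X]
    ring
  have hkey : X^d * (B^(d-1) * S) = X^d * ((1+X)^(d-1) * σ S) := by
    conv_lhs => rw [← hP, ← hσP, hP]
    rw [map_mul, map_mul, map_pow, map_pow, Polynomial.aeval_X, hσB]
    rw [hEd.neg_pow]
  have hcancel : B^(d-1) * S = (1+X)^(d-1) * σ S :=
    mul_left_cancel₀ (pow_ne_zero d Polynomial.X_ne_zero) hkey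
  have hSzero : S = 0 := by
    by_contra hSne
    have hBd : (B:ℚ[X])^(d-1) ≠ 0 := pow_ne_zero _ (hB ▸ one_sub_X_ne_zero)
    have hTne : T ≠ 0 := hS ▸ mul_ne_zero hBd hSne
    have hcop2 : IsCoprime ((1+X : ℚ[X])) (B) := by
      refine ⟨Polynomial.C (2⁻¹:ℚ), Polynomial.C (2⁻¹:ℚ), ?_⟩
      rw [hB]
      have h12 : Polynomial.C (2⁻¹:ℚ) * (1 + X) + Polynomial.C (2⁻¹:ℚ) * (1 - X)
          = Polynomial.C (2⁻¹:ℚ) * Polynomial.C (2:ℚ) := by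
        rw [← two_eq_C_two]; ring
      rw [h12, ← Polynomial.C_mul]
      norm_num
    have hdvd2 : ((1+X:ℚ[X]))^(d-1) ∣ B^(d-1) * S := ⟨σ S, hcancel⟩
    have hdvdS : ((1+X:ℚ[X]))^(d-1) ∣ S :=
      (hcop2.pow.symm.symm).dvd_of_dvd_mul_left hdvd2
    have hdegS : d - 1 ≤ S.natDegree := by
      have h1 := Polynomial.natDegree_le_of_dvd hdvdS hSne
      have h1X : (1+X:ℚ[X]) = X + Polynomial.C 1 := by rw [Polynomial.C_1]; ring
      rwa [Polynomial.natDegree_pow, h1X, Polynomial.natDegree_X_add_C, mul_one] at h1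
    have hdegT_ub : T.natDegree ≤ n - 1 - d := by
      rw [hT]
      refine le_trans (Polynomial.natDegree_sub_le _ _) ?_
      rw [max_le_iff]
      constructor
      · refine Polynomial.natDegree_sum_le_of_forall_le _ _ fun c hc => ?_
        rw [Polynomial.natDegree_X_pow]
        have := hW1 c hc
        omega
      · refine Polynomial.natDegree_sum_le_of_forall_le _ _ fun c hc => ?_
        rw [Polynomial.natDegree_X_pow]
        have := hW2 c hc
        omega
    have hdegT_eq : T.natDegree = (d - 1) + S.natDegree := by
      rw [hS, Polynomial.natDegree_mul hBd hSne, Polynomial.natDegree_pow,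
        natDegree_one_sub_X, mul_one]
    omega
  rw [hSzero, mul_zero, mul_zero] at hP
  exact sub_eq_zero.1 hP

lemma wt_eq (c : Fin n → F4) : wt c = Wt c := by
  unfold wt Wt
  rw [Set.ncard_eq_toFinset_card', Set.toFinset_setOf]

lemma Wt_eq_zero {c : Fin n → F4} (h : Wt c = 0) : c = 0 := by
  unfold Wt at h
  rw [Finset.card_eq_zero, Finset.filter_eq_empty_iff] at h
  funext k
  have := h (Finset.mem_univ k)
  simpa using this

lemma card_filter_erase (i : Fin n) (p : Fin n → Prop) [DecidablePred p] :
    ((univ.erase i).filter p).card = (univ.filter p).card - (if p i then 1 else 0) := by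
  rw [Finset.filter_erase]
  by_cases h : p i
  · rw [if_pos h, Finset.card_erase_of_mem (Finset.mem_filter.2 ⟨Finset.mem_univ _, h⟩)]
  · rw [if_neg h, Finset.erase_eq_of_notMem (fun hm => h (Finset.mem_filter.1 hm).2),
      Nat.sub_zero]

noncomputable def Zc (c : Fin n → F4) : ℕ := (univ.filter (fun k => c k = 0)).card

lemma Zc_add_Wt (c : Fin n → F4) : Zc c + Wt c = n := by
  unfold Zc Wt
  rw [Finset.card_filter_add_card_filter_not, Finset.card_univ, Fintype.card_fin]


/-- For an additive even self-dual `(n, 2ⁿ)` code over `GF(4)` of minimum weight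
`d ≥ (n+2)/3`, the supports of the codewords of each nonzero weight hold a 1-design
(with possibly repeated blocks): for each weight `w`, the number of codewords of weight
`w` that are nonzero at coordinate `i` is independent of `i`. -/
theorem even_self_dual_supports_one_design (n d : ℕ) (C : AddSubgroup (Fin n → F4))
    (hcard : Nat.card C = 2 ^ n)
    (hselfdual : (C : Set (Fin n → F4)) = traceDual (C : Set (Fin n → F4)))
    (heven : ∀ c ∈ C, Even (wt c))
    (hmin : ∀ c ∈ C, c ≠ 0 → d ≤ wt c)
    (hex : ∃ c ∈ C, c ≠ 0 ∧ wt c = d)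
    (hd : n + 2 ≤ 3 * d) :
    ∀ w : ℕ, 0 < w → w ≤ n → ∀ i j : Fin n,
      {c : Fin n → F4 | c ∈ C ∧ wt c = w ∧ c i ≠ 0}.ncard =
        {c : Fin n → F4 | c ∈ C ∧ wt c = w ∧ c j ≠ 0}.ncard := by
  intro w hw hwn i j
  classical
  -- basic facts about d
  obtain ⟨c₀, hc₀C, hc₀ne, hc₀wt⟩ := hex
  have hEd : Even d := hc₀wt ▸ heven c₀ hc₀C
  have hdne : d ≠ 0 := by
    intro h
    exact hc₀ne (Wt_eq_zero (by rw [← wt_eq, hc₀wt, h]))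
  have hd2 : 2 ≤ d := by
    obtain ⟨r, hr⟩ := hEd
    omega
  have hdn : d ≤ n := by
    have h1 : Wt c₀ ≤ n := by
      unfold Wt
      calc (univ.filter (fun k => ¬ c₀ k = 0)).card ≤ (univ : Finset (Fin n)).card :=
            Finset.card_filter_le _ _
        _ = n := by rw [Finset.card_univ, Fintype.card_fin]
    rw [← hc₀wt, wt_eq]
    exact h1
  set CF : Finset (Fin n → F4) := univ.filter (· ∈ C) with hCFdef
  have hCFcard : CF.card = 2 ^ n := by
    rw [← hcard, Nat.card_eq_fintype_card, Fintype.card_subtype]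
  set S1 : Finset (Fin n → F4) := CF.filter (fun c => c i = 0 ∧ ¬ c j = 0) with hS1def
  set S2 : Finset (Fin n → F4) := CF.filter (fun c => c j = 0 ∧ ¬ c i = 0) with hS2def
  -- per-element facts
  have hfacts : ∀ (c : Fin n → F4) (k : Fin n), c ∈ C → c ≠ 0 → c k = 0 →
      d ≤ Wt c ∧ Wt c + 1 ≤ n ∧ Even (Wt c) := by
    intro c k hcC hcne hck
    have h1 : d ≤ Wt c := by rw [← wt_eq]; exact hmin c hcC hcne
    have h3 : Even (Wt c) := by rw [← wt_eq]; exact heven c hcC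
    refine ⟨h1, ?_, h3⟩
    have hZ1 : 1 ≤ Zc c :=
      Finset.card_pos.2 ⟨k, Finset.mem_filter.2 ⟨Finset.mem_univ _, hck⟩⟩
    have := Zc_add_Wt c
    omega
  have hW1 : ∀ c ∈ S1, d ≤ Wt c ∧ Wt c + 1 ≤ n ∧ Even (Wt c) := by
    intro c hc
    rw [hS1def, Finset.mem_filter, hCFdef, Finset.mem_filter] at hc
    obtain ⟨⟨-, hcC⟩, hci, hcj⟩ := hc
    exact hfacts c i hcC (fun h => hcj (by rw [h]; rfl)) hci
  have hW2 : ∀ c ∈ S2, d ≤ Wt c ∧ Wt c + 1 ≤ n ∧ Even (Wt c) := by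
    intro c hc
    rw [hS2def, Finset.mem_filter, hCFdef, Finset.mem_filter] at hc
    obtain ⟨⟨-, hcC⟩, hcj, hci⟩ := hc
    exact hfacts c j hcC (fun h => hci (by rw [h]; rfl)) hcj
  -- master identities and their difference
  have Mi := master C hselfdual i
  have Mj := master C hselfdual j
  have hcast : ((CF.card : ℕ) : ℚ[X]) = (2:ℚ[X])^n := by
    rw [hCFcard]; push_cast; ring
  rw [← hCFdef, hcast] at Mi Mj
  -- LHS rearrangement
  have hLHS : (∑ c ∈ CF, (if c i = 0 then (X:ℚ[X]) ^ (Wt c) else 0))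
        - (∑ c ∈ CF, (if c j = 0 then (X:ℚ[X]) ^ (Wt c) else 0))
      = (∑ c ∈ S1, (X:ℚ[X]) ^ (Wt c)) - ∑ c ∈ S2, (X:ℚ[X]) ^ (Wt c) := by
    have e1 : ∑ c ∈ S1, (X:ℚ[X]) ^ Wt c
        = ∑ c ∈ CF, (if c i = 0 ∧ ¬ c j = 0 then (X:ℚ[X]) ^ Wt c else 0) := by
      rw [hS1def]; exact Finset.sum_filter _ _
    have e2 : ∑ c ∈ S2, (X:ℚ[X]) ^ Wt c
        = ∑ c ∈ CF, (if c j = 0 ∧ ¬ c i = 0 then (X:ℚ[X]) ^ Wt c else 0) := by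
      rw [hS2def]; exact Finset.sum_filter _ _
    rw [e1, e2, ← Finset.sum_sub_distrib, ← Finset.sum_sub_distrib]
    refine Finset.sum_congr rfl fun c _ => ?_
    by_cases h1 : c i = 0 <;> by_cases h2 : c j = 0 <;> simp [h1, h2]
  -- RHS pointwise rearrangement
  have hRHS : ∀ c : Fin n → F4,
      (1 + 3*X : ℚ[X]) ^ (((univ.erase i).filter (fun k => c k = 0)).card)
          * (1 - X : ℚ[X]) ^ (((univ.erase i).filter (fun k => ¬ (c k = 0))).card)
        - (1 + 3*X : ℚ[X]) ^ (((univ.erase j).filter (fun k => c k = 0)).card)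
          * (1 - X : ℚ[X]) ^ (((univ.erase j).filter (fun k => ¬ (c k = 0))).card)
      = (if c i = 0 ∧ ¬ c j = 0 then
            -(4*X) * ((1+3*X)^(Zc c - 1) * (1-X)^(Wt c - 1)) else 0)
        + (if c j = 0 ∧ ¬ c i = 0 then
            (4*X) * ((1+3*X)^(Zc c - 1) * (1-X)^(Wt c - 1)) else 0) := by
    intro c
    rw [card_filter_erase i (fun k => c k = 0), card_filter_erase i (fun k => ¬ c k = 0),
      card_filter_erase j (fun k => c k = 0), card_filter_erase j (fun k => ¬ c k = 0)]
    rw [show (univ.filter (fun k => c k = 0)).card = Zc c from rfl,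
      show (univ.filter (fun k => ¬ c k = 0)).card = Wt c from rfl]
    by_cases h1 : c i = 0 <;> by_cases h2 : c j = 0
    · simp [h1, h2]
    · -- c i = 0, c j ≠ 0 : S1 case
      have hZ1 : 1 ≤ Zc c :=
        Finset.card_pos.2 ⟨i, Finset.mem_filter.2 ⟨Finset.mem_univ _, h1⟩⟩
      have hw1 : 1 ≤ Wt c :=
        Finset.card_pos.2 ⟨j, Finset.mem_filter.2 ⟨Finset.mem_univ _, h2⟩⟩
      obtain ⟨z', hz'⟩ : ∃ z', Zc c = z' + 1 := ⟨Zc c - 1, by omega⟩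
      obtain ⟨w', hw'⟩ : ∃ w', Wt c = w' + 1 := ⟨Wt c - 1, by omega⟩
      simp only [h1, h2]
      rw [hz', hw']
      simp only [Nat.add_sub_cancel, Nat.sub_zero]
      simp [h2]
      ring
    · -- c j = 0, c i ≠ 0 : S2 case
      have hZ1 : 1 ≤ Zc c :=
        Finset.card_pos.2 ⟨j, Finset.mem_filter.2 ⟨Finset.mem_univ _, h2⟩⟩
      have hw1 : 1 ≤ Wt c :=
        Finset.card_pos.2 ⟨i, Finset.mem_filter.2 ⟨Finset.mem_univ _, h1⟩⟩
      obtain ⟨z', hz'⟩ : ∃ z', Zc c = z' + 1 := ⟨Zc c - 1, by omega⟩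
      obtain ⟨w', hw'⟩ : ∃ w', Wt c = w' + 1 := ⟨Wt c - 1, by omega⟩
      simp only [h1, h2]
      rw [hz', hw']
      simp only [Nat.add_sub_cancel, Nat.sub_zero]
      simp [h1]
      ring
    · simp [h1, h2]
  -- assemble the equation for poly_core
  have heq : (2^n : ℚ[X]) * ((∑ c ∈ S1, X ^ Wt c) - ∑ c ∈ S2, X ^ Wt c)
      = -(4*X) * (∑ c ∈ S1, (1+3*X)^(Zc c - 1) * (1-X)^(Wt c - 1))
        + (4*X) * (∑ c ∈ S2, (1+3*X)^(Zc c - 1) * (1-X)^(Wt c - 1)) := by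
    rw [← hLHS, mul_sub, Mi, Mj, ← Finset.sum_sub_distrib]
    rw [Finset.sum_congr rfl (fun c _ => hRHS c), Finset.sum_add_distrib]
    rw [hS1def, hS2def, ← Finset.sum_filter, ← Finset.sum_filter,
      Finset.mul_sum, Finset.mul_sum]
  have hPP := poly_core n d S1 S2 Wt Zc hW1 hW2 hd2 hdn hEd hd heq
  -- extract coefficients
  have hcount : (S1.filter (fun c => w = Wt c)).card
      = (S2.filter (fun c => w = Wt c)).card := by
    have hco := congrArg (fun p => Polynomial.coeff p w) hPP
    simp only [Polynomial.finset_sum_coeff, Polynomial.coeff_X_pow] at hco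
    rw [Finset.sum_boole, Finset.sum_boole] at hco
    exact_mod_cast hco
  -- final counting
  have hset : ∀ k : Fin n, {c : Fin n → F4 | c ∈ C ∧ wt c = w ∧ c k ≠ 0}.ncard
      = (univ.filter (fun c : Fin n → F4 => c ∈ C ∧ wt c = w ∧ c k ≠ 0)).card := by
    intro k
    rw [Set.ncard_eq_toFinset_card', Set.toFinset_setOf]
  rw [hset i, hset j]
  set si := univ.filter (fun c : Fin n → F4 => c ∈ C ∧ wt c = w ∧ c i ≠ 0) with hsidef
  set sj := univ.filter (fun c : Fin n → F4 => c ∈ C ∧ wt c = w ∧ c j ≠ 0) with hsjdef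
  have hparti := Finset.card_filter_add_card_filter_not
    (s := si) (p := fun c => c j = 0)
  have hpartj := Finset.card_filter_add_card_filter_not
    (s := sj) (p := fun c => c i = 0)
  have hcommon : si.filter (fun c => ¬ c j = 0) = sj.filter (fun c => ¬ c i = 0) := by
    ext c
    simp only [hsidef, hsjdef, Finset.mem_filter, Finset.mem_univ, true_and]
    tauto
  have hB1 : si.filter (fun c => c j = 0) = S2.filter (fun c => w = Wt c) := by
    ext c
    simp only [hsidef, hS2def, hCFdef, Finset.mem_filter, Finset.mem_univ, true_and,
      wt_eq, eq_comm]
    tauto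
  have hB2 : sj.filter (fun c => c i = 0) = S1.filter (fun c => w = Wt c) := by
    ext c
    simp only [hsjdef, hS1def, hCFdef, Finset.mem_filter, Finset.mem_univ, true_and,
      wt_eq, eq_comm]
    tauto
  rw [hB1] at hparti
  rw [hB2] at hpartj
  rw [hcommon] at hparti
  rw [← hparti, ← hpartj, hcount]
end

section
/- Let QC₁₂ ⊆ GF(4)¹² be the GF(2)-linear span of the twelve vectors (0,0,0,0,0,0,1,1,1,1,1,1), (0,0,0,0,0,0,ω,ω,ω,ω,ω,ω), (1,1,1,1,1,1,0,0,0,0,0,0), (ω,ω,ω,ω,ω,ω,0,0,0,0,0,0), (0,0,0,1,ω,ω̄,0,0,0,1,ω,ω̄), (0,0,0,ω,ω̄,1,0,0,0,ω,ω̄,1), (1,ω̄,ω,0,0,0,1,ω̄,ω,0,0,0), (ω,1,ω̄,0,0,0,ω,1,ω̄,0,0,0), (0,0,0,1,ω̄,ω,ω,ω̄,1,0,0,0), (0,0,0,ω,1,ω̄,1,ω,ω̄,0,0,0), (1,ω,ω̄,0,0,0,0,0,0,ω̄,ω,1), (ω̄,1,ω,0,0,0,0,0,0,1,ω̄,ω)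 (the dodecacode). Then |QC₁₂| = 2¹², QC₁₂ is self-dual with respect to the trace inner product, every codeword has even weight, and its weight distribution is A₆ = 396, A₈ = 1485, A₁₀ = 1980, A₁₂ = 234, with no nonzero codewords of any other weight; in particular the minimum weight is 6. -/
/-- The dodecacode `QC₁₂`: the `GF(2)`-linear span of the twelve listed generators,
where `ω̄ = ω²`. -/
noncomputable def dodecacode (ω : F4) : Submodule (ZMod 2) (Fin 12 → F4) :=
  Submodule.span (ZMod 2)
    { ![0,0,0,0,0,0,1,1,1,1,1,1],
      ![0,0,0,0,0,0,ω,ω,ω,ω,ω,ω],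
      ![1,1,1,1,1,1,0,0,0,0,0,0],
      ![ω,ω,ω,ω,ω,ω,0,0,0,0,0,0],
      ![0,0,0,1,ω,ω^2,0,0,0,1,ω,ω^2],
      ![0,0,0,ω,ω^2,1,0,0,0,ω,ω^2,1],
      ![1,ω^2,ω,0,0,0,1,ω^2,ω,0,0,0],
      ![ω,1,ω^2,0,0,0,ω,1,ω^2,0,0,0],
      ![0,0,0,1,ω^2,ω,ω,ω^2,1,0,0,0],
      ![0,0,0,ω,1,ω^2,1,ω,ω^2,0,0,0],
      ![1,ω,ω^2,0,0,0,0,0,0,ω^2,ω,1],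
      ![ω^2,1,ω,0,0,0,0,0,0,1,ω^2,ω] }


open Finset
set_option maxHeartbeats 1000000
set_option maxRecDepth 8000

def GA : Fin 12 → Fin 12 → ZMod 2 := ![![0,0,0,0,0,0,1,1,1,1,1,1],
 ![0,0,0,0,0,0,0,0,0,0,0,0],
 ![1,1,1,1,1,1,0,0,0,0,0,0],
 ![0,0,0,0,0,0,0,0,0,0,0,0],
 ![0,0,0,1,0,1,0,0,0,1,0,1],
 ![0,0,0,0,1,1,0,0,0,0,1,1],
 ![1,1,0,0,0,0,1,1,0,0,0,0],
 ![0,1,1,0,0,0,0,1,1,0,0,0],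
 ![0,0,0,1,1,0,0,1,1,0,0,0],
 ![0,0,0,0,1,1,1,0,1,0,0,0],
 ![1,0,1,0,0,0,0,0,0,1,0,1],
 ![1,1,0,0,0,0,0,0,0,1,1,0]]
def GB : Fin 12 → Fin 12 → ZMod 2 := ![![0,0,0,0,0,0,0,0,0,0,0,0],
 ![0,0,0,0,0,0,1,1,1,1,1,1],
 ![0,0,0,0,0,0,0,0,0,0,0,0],
 ![1,1,1,1,1,1,0,0,0,0,0,0],
 ![0,0,0,0,1,1,0,0,0,0,1,1],
 ![0,0,0,1,1,0,0,0,0,1,1,0],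
 ![0,1,1,0,0,0,0,1,1,0,0,0],
 ![1,0,1,0,0,0,1,0,1,0,0,0],
 ![0,0,0,0,1,1,1,1,0,0,0,0],
 ![0,0,0,1,0,1,0,1,1,0,0,0],
 ![0,1,1,0,0,0,0,0,0,1,1,0],
 ![1,0,1,0,0,0,0,0,0,0,1,1]]
def PL : Fin 12 → Fin 12 → ZMod 2 := ![![0,0,0,0,0,0,0,0,0,0,0,1],
 ![0,0,0,0,0,0,0,0,0,0,0,0],
 ![0,0,0,0,0,1,0,0,0,0,0,0],
 ![0,0,0,0,0,0,0,0,0,0,0,0],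
 ![0,0,0,0,0,0,0,0,0,0,0,0],
 ![0,0,0,0,0,0,0,0,0,0,0,0],
 ![0,0,0,0,0,0,0,0,0,0,0,0],
 ![0,0,0,0,0,0,0,0,0,0,0,0],
 ![0,0,0,0,0,0,0,0,0,0,0,0],
 ![0,0,0,0,0,0,0,0,0,0,0,0],
 ![0,0,0,0,0,0,0,0,0,0,0,0],
 ![0,0,0,0,0,0,0,0,0,0,0,0]]
def PR : Fin 12 → Fin 12 → ZMod 2 := ![![0,0,1,1,0,0,0,0,1,0,0,1],
 ![0,0,0,0,0,0,0,0,0,1,1,1],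
 ![0,0,1,1,1,1,0,0,1,0,1,0],
 ![0,0,0,1,1,1,0,0,0,0,0,0],
 ![0,0,1,1,0,0,0,0,1,0,1,0],
 ![0,1,1,1,0,1,0,1,1,1,1,0],
 ![0,0,1,0,1,0,0,1,1,1,0,1],
 ![0,1,0,1,0,0,0,0,1,1,0,0],
 ![0,1,0,1,0,0,0,1,0,1,0,0],
 ![0,1,1,1,1,0,0,1,1,1,1,0],
 ![0,1,1,1,0,1,0,1,1,1,0,1],
 ![0,0,1,1,0,0,0,0,1,1,0,0]]
def RA : Fin 12 → Fin 12 → ZMod 2 := ![![0,0,1,1,0,1,0,0,0,0,1,0],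
 ![1,0,0,1,0,0,0,1,1,1,0,0],
 ![0,0,0,1,1,0,1,0,0,1,0,1],
 ![1,0,1,0,1,0,0,1,1,1,0,1],
 ![0,0,0,0,0,1,1,0,0,1,1,0],
 ![0,0,0,0,0,0,0,0,0,0,0,0],
 ![1,1,0,0,0,0,1,0,0,0,1,0],
 ![1,1,0,0,0,1,0,0,1,1,0,0],
 ![1,1,1,0,1,1,0,1,0,1,0,1],
 ![1,0,1,0,0,1,0,1,1,1,0,1],
 ![0,0,0,0,1,1,1,0,0,1,1,0],
 ![0,0,0,0,0,0,0,0,0,0,0,0]]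
def RB : Fin 12 → Fin 12 → ZMod 2 := ![![0,0,1,0,0,0,0,0,0,0,0,0],
 ![0,0,0,0,0,0,0,0,0,0,0,0],
 ![0,0,0,0,0,0,0,0,0,0,0,0],
 ![0,0,0,0,0,0,0,0,0,0,0,0],
 ![0,0,0,0,0,0,0,0,0,0,0,0],
 ![0,0,0,0,0,0,0,0,0,0,0,0],
 ![1,0,0,0,0,0,0,0,0,0,0,0],
 ![0,0,0,0,0,0,0,0,0,0,0,0],
 ![0,0,0,0,0,0,0,0,0,0,0,0],
 ![0,0,0,0,0,0,0,0,0,0,0,0],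
 ![0,0,0,0,0,0,0,0,0,0,0,0],
 ![0,0,0,0,0,0,0,0,0,0,0,0]]
def GpL : Fin 12 → Fin 12 → ZMod 2 := ![![0,0,0,0,0,0,1,1,1,0,0,0],
 ![0,1,0,0,1,0,1,0,0,0,1,0],
 ![1,1,1,0,0,0,0,0,0,0,0,0],
 ![1,1,1,0,1,0,0,0,1,0,1,0],
 ![0,0,1,0,1,0,1,1,0,1,1,0],
 ![0,1,1,1,1,0,1,0,0,1,0,0],
 ![0,1,0,0,1,0,0,0,1,0,1,0],
 ![1,0,0,1,0,0,0,1,0,1,0,0],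
 ![1,1,0,1,1,0,1,1,0,1,1,0],
 ![0,1,0,0,1,0,0,1,0,0,1,0],
 ![0,1,0,1,0,0,0,1,0,1,0,0],
 ![0,1,1,1,1,0,0,1,1,1,1,0]]
def GpR : Fin 12 → Fin 12 → ZMod 2 := ![![0,0,0,0,0,0,0,0,0,0,0,0],
 ![0,0,0,0,0,0,1,0,0,0,0,0],
 ![0,0,0,0,0,0,0,0,0,0,0,0],
 ![1,0,0,0,0,0,0,0,0,0,0,0],
 ![0,0,0,0,0,0,0,0,0,0,0,0],
 ![0,0,0,0,0,0,0,0,0,0,0,0],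
 ![0,0,0,0,0,0,0,0,0,0,0,0],
 ![0,0,0,0,0,0,0,0,0,0,0,0],
 ![0,0,0,0,0,0,0,0,0,0,0,0],
 ![0,0,0,0,0,0,0,0,0,0,0,0],
 ![0,0,0,0,0,0,0,0,0,0,0,0],
 ![0,0,0,0,0,0,0,0,0,0,0,0]]
def B1 : ℕ := 880104742912565958087978339634148532819904374416972022075552070654242731665006615801533478861993892644940571787411741108484892944029982059330139145909474699176189400500356383248547230314104407469084790524269690980163238480066879366457254327787331984969680412609724406286279659544325070119835884436498373204733640671069374817206227755474867020838816904184271196840893321737030147941998190751501351838316245058042345824108813669294106394122080338603992802131968000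
def B2 : ℕ := 1747037758788951188574288792115077297809320505387718740094778661975714785634598494653209184413819292568633896783094116972985034375861723000268545243481605523558144701662945064162001681058022290485616721332921291035904385219816779666983980080717604878904409042029708632353994326580529229523741085646428985489642167739124862496706792593887900854466212233755587016151770414732388587716403496898719035939919789831192171524930795764516230649765885219054103970059386880

def amap (v : Fin 12 → ZMod 2) (j : Fin 12) : ZMod 2 := ∑ i, v i * GA i j
def bmap (v : Fin 12 → ZMod 2) (j : Fin 12) : ZMod 2 := ∑ i, v i * GB i j
def vLow (lo : Fin 64) : Fin 12 → ZMod 2 :=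
  fun i => if i.val < 6 then (if lo.val.testBit i.val then 1 else 0) else 0
def vHigh (hi : Fin 64) : Fin 12 → ZMod 2 :=
  fun i => if i.val < 6 then 0 else (if hi.val.testBit (i.val - 6) then 1 else 0)
def dec2 (p : Fin 64 × Fin 64) : Fin 12 → ZMod 2 := vLow p.2 + vHigh p.1
def RepB (m : ℕ) (v : Fin 12 → ZMod 2) : Prop :=
  ∀ j : Fin 12, amap v j = (if m.testBit j.val then 1 else 0) ∧
    bmap v j = (if m.testBit (j.val + 12) then 1 else 0)
instance (m : ℕ) (v : Fin 12 → ZMod 2) : Decidable (RepB m v) := by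
  unfold RepB; infer_instance
def pc : ℕ → ℕ → ℕ
  | 0, _ => 0
  | f+1, x => x % 2 + pc f (x / 2)
def mN (p : Fin 64 × Fin 64) : ℕ := (B1 >>> (24 * p.2.val)) ^^^ (B2 >>> (24 * p.1.val))
def xN (p : Fin 64 × Fin 64) : ℕ := (mN p % 4096) ||| ((mN p >>> 12) % 4096)
def fw (p : Fin 64 × Fin 64) : ℕ := pc 12 (xN p)
def wcount (v : Fin 12 → ZMod 2) : ℕ :=
  (univ.filter fun j : Fin 12 => ¬(amap v j = 0 ∧ bmap v j = 0)).card
def vrec (a b : Fin 12 → ZMod 2) : Fin 12 → ZMod 2 := fun i => ∑ j, (PL i j * a j + PR i j * b j)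

/-! ### decidable computations -/

lemma repLow : ∀ lo : Fin 64, RepB (B1 >>> (24 * lo.val)) (vLow lo) := by decide
lemma repHigh : ∀ hi : Fin 64, RepB (B2 >>> (24 * hi.val)) (vHigh hi) := by decide
lemma count6 : (∑ hi : Fin 64, ∑ lo : Fin 64, if fw (hi, lo) = 6 then 1 else 0) = 396 := by decide
lemma count8 : (∑ hi : Fin 64, ∑ lo : Fin 64, if fw (hi, lo) = 8 then 1 else 0) = 1485 := by decide
lemma count10 : (∑ hi : Fin 64, ∑ lo : Fin 64, if fw (hi, lo) = 10 then 1 else 0) = 1980 := by decide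
lemma count12 : (∑ hi : Fin 64, ∑ lo : Fin 64, if fw (hi, lo) = 12 then 1 else 0) = 234 := by decide
lemma wlist : ∀ hi lo : Fin 64, fw (hi, lo) = 0 ∨ fw (hi, lo) = 6 ∨ fw (hi, lo) = 8 ∨
    fw (hi, lo) = 10 ∨ fw (hi, lo) = 12 := by decide
lemma I1 : ∀ i i' : Fin 12, (∑ j, (GpL i' j * GA i j + GpR i' j * GB i j)) =
    if i = i' then 1 else 0 := by decide
lemma I2 : ∀ i k : Fin 12, (∑ j, (GA i j * GB k j + GB i j * GA k j)) = 0 := by decide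
lemma I3 : ∀ j j' : Fin 12, (∑ i, PL i j * GA i j') =
    (if j = j' then 1 else 0) + ∑ i, RA j' i * GB i j := by decide
lemma I4 : ∀ j j' : Fin 12, (∑ i, PR i j * GA i j') = ∑ i, RA j' i * GA i j := by decide
lemma I5 : ∀ j j' : Fin 12, (∑ i, PL i j * GB i j') = ∑ i, RB j' i * GB i j := by decide
lemma I6 : ∀ j j' : Fin 12, (∑ i, PR i j * GB i j') =
    (if j = j' then 1 else 0) + ∑ i, RB j' i * GA i j := by decide

/-! ### ZMod 2 sum manipulation -/

lemma leftinv (v : Fin 12 → ZMod 2) (i' : Fin 12) :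
    (∑ j, (GpL i' j * amap v j + GpR i' j * bmap v j)) = v i' := by
  calc (∑ j, (GpL i' j * amap v j + GpR i' j * bmap v j))
      = ∑ j, ∑ i, v i * (GpL i' j * GA i j + GpR i' j * GB i j) := by
        refine Finset.sum_congr rfl fun j _ => ?_
        simp only [amap, bmap, Finset.mul_sum, ← Finset.sum_add_distrib]
        exact Finset.sum_congr rfl fun i _ => by ring
    _ = ∑ i, ∑ j, v i * (GpL i' j * GA i j + GpR i' j * GB i j) := Finset.sum_comm
    _ = ∑ i, v i * ∑ j, (GpL i' j * GA i j + GpR i' j * GB i j) :=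
        Finset.sum_congr rfl fun i _ => (Finset.mul_sum _ _ _).symm
    _ = ∑ i, v i * (if i = i' then 1 else 0) := by simp only [I1]
    _ = v i' := by simp

lemma inner_zero (v w : Fin 12 → ZMod 2) :
    (∑ j, (amap v j * bmap w j + bmap v j * amap w j)) = 0 := by
  calc (∑ j, (amap v j * bmap w j + bmap v j * amap w j))
      = ∑ j, ∑ i, ∑ k, v i * w k * (GA i j * GB k j + GB i j * GA k j) := by
        refine Finset.sum_congr rfl fun j _ => ?_
        simp only [amap, bmap, Finset.sum_mul_sum, ← Finset.sum_add_distrib]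
        exact Finset.sum_congr rfl fun i _ =>
          Finset.sum_congr rfl fun k _ => by ring
    _ = ∑ i, ∑ j, ∑ k, v i * w k * (GA i j * GB k j + GB i j * GA k j) := Finset.sum_comm
    _ = ∑ i, ∑ k, ∑ j, v i * w k * (GA i j * GB k j + GB i j * GA k j) :=
        Finset.sum_congr rfl fun i _ => Finset.sum_comm
    _ = ∑ i, ∑ k, v i * w k * ∑ j, (GA i j * GB k j + GB i j * GA k j) :=
        Finset.sum_congr rfl fun i _ => Finset.sum_congr rfl fun k _ =>
          (Finset.mul_sum _ _ _).symm
    _ = 0 := by simp [I2]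

lemma recover_a (a b : Fin 12 → ZMod 2)
    (hd : ∀ i, (∑ j, (a j * GB i j + b j * GA i j)) = 0) (j' : Fin 12) :
    amap (vrec a b) j' = a j' := by
  calc amap (vrec a b) j'
      = ∑ i, ∑ j, (a j * (PL i j * GA i j') + b j * (PR i j * GA i j')) := by
        refine Finset.sum_congr rfl fun i _ => ?_
        show vrec a b i * GA i j' = _
        simp only [vrec, Finset.sum_mul]
        exact Finset.sum_congr rfl fun j _ => by ring
    _ = ∑ j, ∑ i, (a j * (PL i j * GA i j') + b j * (PR i j * GA i j')) := Finset.sum_comm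
    _ = ∑ j, (a j * (∑ i, PL i j * GA i j') + b j * (∑ i, PR i j * GA i j')) :=
        Finset.sum_congr rfl fun j _ => by
          rw [Finset.sum_add_distrib, ← Finset.mul_sum, ← Finset.mul_sum]
    _ = ∑ j, (a j * (if j = j' then 1 else 0) + ∑ i, RA j' i * (a j * GB i j + b j * GA i j)) := by
        refine Finset.sum_congr rfl fun j _ => ?_
        rw [I3, I4, mul_add, Finset.mul_sum, Finset.mul_sum, add_assoc, ← Finset.sum_add_distrib]
        exact congrArg _ (Finset.sum_congr rfl fun i _ => by ring)
    _ = (∑ j, a j * (if j = j' then 1 else 0)) +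
        ∑ j, ∑ i, RA j' i * (a j * GB i j + b j * GA i j) := Finset.sum_add_distrib
    _ = (∑ j, a j * (if j = j' then 1 else 0)) +
        ∑ i, RA j' i * ∑ j, (a j * GB i j + b j * GA i j) := by
        rw [Finset.sum_comm]
        exact congrArg _ (Finset.sum_congr rfl fun i _ => (Finset.mul_sum _ _ _).symm)
    _ = a j' := by simp [hd]

lemma recover_b (a b : Fin 12 → ZMod 2)
    (hd : ∀ i, (∑ j, (a j * GB i j + b j * GA i j)) = 0) (j' : Fin 12) :
    bmap (vrec a b) j' = b j' := by
  calc bmap (vrec a b) j'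
      = ∑ i, ∑ j, (a j * (PL i j * GB i j') + b j * (PR i j * GB i j')) := by
        refine Finset.sum_congr rfl fun i _ => ?_
        show vrec a b i * GB i j' = _
        simp only [vrec, Finset.sum_mul]
        exact Finset.sum_congr rfl fun j _ => by ring
    _ = ∑ j, ∑ i, (a j * (PL i j * GB i j') + b j * (PR i j * GB i j')) := Finset.sum_comm
    _ = ∑ j, (a j * (∑ i, PL i j * GB i j') + b j * (∑ i, PR i j * GB i j')) :=
        Finset.sum_congr rfl fun j _ => by
          rw [Finset.sum_add_distrib, ← Finset.mul_sum, ← Finset.mul_sum]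
    _ = ∑ j, (b j * (if j = j' then 1 else 0) + ∑ i, RB j' i * (a j * GB i j + b j * GA i j)) := by
        refine Finset.sum_congr rfl fun j _ => ?_
        rw [I5, I6, mul_add, Finset.mul_sum, Finset.mul_sum, add_left_comm,
          ← Finset.sum_add_distrib]
        exact congrArg _ (Finset.sum_congr rfl fun i _ => by ring)
    _ = (∑ j, b j * (if j = j' then 1 else 0)) +
        ∑ j, ∑ i, RB j' i * (a j * GB i j + b j * GA i j) := Finset.sum_add_distrib
    _ = (∑ j, b j * (if j = j' then 1 else 0)) +
        ∑ i, RB j' i * ∑ j, (a j * GB i j + b j * GA i j) := by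
        rw [Finset.sum_comm]
        exact congrArg _ (Finset.sum_congr rfl fun i _ => (Finset.mul_sum _ _ _).symm)
    _ = b j' := by simp [hd]

lemma amap_add (v w : Fin 12 → ZMod 2) (j : Fin 12) :
    amap (v + w) j = amap v j + amap w j := by
  simp [amap, add_mul, Finset.sum_add_distrib]

lemma bmap_add (v w : Fin 12 → ZMod 2) (j : Fin 12) :
    bmap (v + w) j = bmap v j + bmap w j := by
  simp [bmap, add_mul, Finset.sum_add_distrib]

lemma rep_xor {m m' : ℕ} {v w : Fin 12 → ZMod 2} (h : RepB m v) (h' : RepB m' w) :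
    RepB (m ^^^ m') (v + w) := by
  intro j
  obtain ⟨h1, h2⟩ := h j
  obtain ⟨h1', h2'⟩ := h' j
  constructor
  · rw [amap_add, h1, h1', Nat.testBit_xor]
    cases m.testBit j.val <;> cases m'.testBit j.val <;> decide
  · rw [bmap_add, h2, h2', Nat.testBit_xor]
    cases m.testBit (j.val + 12) <;> cases m'.testBit (j.val + 12) <;> decide

lemma pc_spec : ∀ (f x : ℕ), x < 2^f → pc f x = ∑ i ∈ Finset.range f, (if x.testBit i then 1 else 0)
  | 0, x, h => by
      have : x = 0 := by omega
      simp [this, pc]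
  | f+1, x, h => by
      have hx : x / 2 < 2^f := by
        rw [Nat.div_lt_iff_lt_mul (by norm_num)]
        calc x < 2^(f+1) := h
          _ = 2^f * 2 := by ring
      rw [Finset.sum_range_succ', show pc (f+1) x = x % 2 + pc f (x / 2) from rfl,
        pc_spec f (x / 2) hx]
      have hb : ∀ i : ℕ, x.testBit (i + 1) = (x / 2).testBit i := fun i => Nat.testBit_succ x i
      simp only [hb, Nat.testBit_zero]
      rcases Nat.mod_two_eq_zero_or_one x with h0 | h0 <;> simp [h0] <;> omega

lemma card_testBit (x : ℕ) (hx : x < 4096) :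
    (univ.filter fun j : Fin 12 => x.testBit j.val).card = pc 12 x := by
  rw [Finset.card_filter, Fin.sum_univ_eq_sum_range (fun i => if x.testBit i then (1:ℕ) else 0) 12,
    pc_spec 12 x (by norm_num; exact hx)]

lemma iteinj : ∀ (a b : Bool), ((if a then (1 : ZMod 2) else 0) = if b then 1 else 0) → a = b := by
  decide

lemma xN_lt (p : Fin 64 × Fin 64) : xN p < 4096 :=
  Nat.or_lt_two_pow (n := 12) (Nat.mod_lt _ (by norm_num)) (Nat.mod_lt _ (by norm_num))

lemma wcount_dec2 (p : Fin 64 × Fin 64) : wcount (dec2 p) = fw p := by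
  have hR : RepB (mN p) (dec2 p) := rep_xor (repLow p.2) (repHigh p.1)
  unfold wcount fw
  rw [← card_testBit (xN p) (xN_lt p)]
  congr 1
  refine Finset.filter_congr fun j _ => ?_
  obtain ⟨h1, h2⟩ := hR j
  rw [h1, h2]
  have hbit : (xN p).testBit j.val = ((mN p).testBit j.val || (mN p).testBit (j.val + 12)) := by
    rw [xN, Nat.testBit_or, show (4096:ℕ) = 2^12 from rfl, Nat.testBit_mod_two_pow,
      Nat.testBit_mod_two_pow, Nat.testBit_shiftRight]
    simp [j.isLt, Nat.add_comm 12 j.val]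
  rw [hbit]
  cases hA : (mN p).testBit j.val <;> cases hB : (mN p).testBit (j.val + 12) <;> simp

lemma dec2_bij : Function.Bijective dec2 := by
  rw [Fintype.bijective_iff_injective_and_card]
  constructor
  · intro p q h
    have key : ∀ (u u' : Fin 64), (∀ i : ℕ, i < 6 → u.val.testBit i = u'.val.testBit i) →
        u = u' := by
      intro u u' hb
      apply Fin.ext
      apply Nat.eq_of_testBit_eq
      intro i
      by_cases hi : i < 6
      · exact hb i hi
      · have h64 : (64:ℕ) ≤ 2^i := by
          calc (64:ℕ) = 2^6 := by norm_num
            _ ≤ 2^i := Nat.pow_le_pow_right (by norm_num) (by omega)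
        have b1 : u.val < 2^i := lt_of_lt_of_le u.isLt h64
        have b2 : u'.val < 2^i := lt_of_lt_of_le u'.isLt h64
        rw [Nat.testBit_lt_two_pow b1, Nat.testBit_lt_two_pow b2]
    have hlo : p.2 = q.2 := by
      apply key
      intro i hi
      have hc := congrFun h ⟨i, by omega⟩
      simp only [dec2, Pi.add_apply, vLow, vHigh] at hc
      simp only [show ((⟨i, by omega⟩ : Fin 12) : ℕ) = i from rfl, if_pos hi, add_zero] at hc
      exact iteinj _ _ hc
    have hhi : p.1 = q.1 := by
      apply key
      intro i hi
      have hc := congrFun h ⟨i + 6, by omega⟩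
      simp only [dec2, Pi.add_apply, vLow, vHigh] at hc
      simp only [show ((⟨i + 6, by omega⟩ : Fin 12) : ℕ) = i + 6 from rfl,
        if_neg (by omega : ¬ i + 6 < 6), Nat.add_sub_cancel, zero_add] at hc
      exact iteinj _ _ hc
    exact Prod.ext hhi hlo
  · simp [Fintype.card_fun]

/-! ### the field `GF(4)` -/

noncomputable def aM : ZMod 2 →+* F4 := algebraMap (ZMod 2) F4

noncomputable def phi (ω : F4) (p : ZMod 2 × ZMod 2) : F4 := aM p.1 + aM p.2 * ω

lemma two_zero : (2 : F4) = 0 := by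
  have h := CharP.cast_eq_zero F4 2
  exact_mod_cast h

lemma add_self (x : F4) : x + x = 0 := CharTwo.add_self_eq_zero x

lemma aM_sq (a : ZMod 2) : (aM a) ^ 2 = aM a := by
  rw [← map_pow]
  congr 1
  revert a
  decide

lemma finite_F4 : Finite F4 :=
  Nat.finite_of_card_ne_zero (by rw [GaloisField.card 2 2 (by norm_num)]; norm_num)

section Omega

variable {ω : F4} (hω : ω ^ 2 = ω + 1)

include hω

lemma omega_ne_zero : ω ≠ 0 := by
  intro h
  rw [h] at hω
  simp at hω

lemma omega_ne_one : ω ≠ 1 := by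
  intro h
  rw [h, one_pow] at hω
  have h2 : (1 : F4) + 1 = 0 := add_self 1
  rw [← hω] at h2
  exact one_ne_zero h2

lemma phi_eq_zero {p : ZMod 2 × ZMod 2} (h : phi ω p = 0) : p = 0 := by
  obtain ⟨x, y⟩ := p
  rcases (by decide : ∀ a : ZMod 2, a = 0 ∨ a = 1) x with rfl | rfl <;>
    rcases (by decide : ∀ a : ZMod 2, a = 0 ∨ a = 1) y with rfl | rfl
  · rfl
  · exfalso
    apply omega_ne_zero hω
    simpa [phi, aM] using h
  · exfalso
    apply one_ne_zero (α := F4)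
    simpa [phi, aM] using h
  · exfalso
    apply omega_ne_one hω
    have h' : (1 : F4) + ω = 0 := by simpa [phi, aM] using h
    have h2 : (1 : F4) + 1 = 0 := add_self 1
    exact add_left_cancel (h'.trans h2.symm)

lemma phi_add (p q : ZMod 2 × ZMod 2) : phi ω (p + q) = phi ω p + phi ω q := by
  simp only [phi, Prod.fst_add, Prod.snd_add, map_add]
  ring

lemma phi_inj : Function.Injective (phi ω) := by
  intro p q h
  have h0 : phi ω (p + q) = 0 := by
    rw [phi_add hω, h]
    exact add_self _
  have hpq := phi_eq_zero hω h0
  exact (by decide : ∀ p q : ZMod 2 × ZMod 2, p + q = 0 → p = q) p q hpq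

lemma phi_bij : Function.Bijective (phi ω) := by
  have := finite_F4
  rw [Nat.bijective_iff_injective_and_card]
  refine ⟨phi_inj hω, ?_⟩
  rw [GaloisField.card 2 2 (by norm_num), Nat.card_eq_fintype_card]
  simp

lemma conj_phi (q : ZMod 2 × ZMod 2) : conj (phi ω q) = phi ω (q.1 + q.2, q.2) := by
  have h2 : (2 : F4) = 0 := two_zero
  have hA := aM_sq q.1
  have hB := aM_sq q.2
  simp only [conj, phi, map_add]
  linear_combination hA + ω ^ 2 * hB + (aM q.2) * hω + (aM q.1 * aM q.2 * ω) * h2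

lemma mul_phi (p q : ZMod 2 × ZMod 2) :
    phi ω p * phi ω q = phi ω (p.1 * q.1 + p.2 * q.2, p.1 * q.2 + p.2 * q.1 + p.2 * q.2) := by
  simp only [phi, map_add, map_mul]
  linear_combination (aM p.2 * aM q.2) * hω

lemma tr_phi (p : ZMod 2 × ZMod 2) : tr (phi ω p) = aM p.2 := by
  show phi ω p + (phi ω p) ^ 2 = aM p.2
  rw [show (phi ω p) ^ 2 = conj (phi ω p) from rfl, conj_phi hω, ← phi_add hω,
    (by decide : ∀ r : ZMod 2 × ZMod 2, r + (r.1 + r.2, r.2) = (r.2, 0)) p]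
  simp [phi]

lemma trip (p q : ZMod 2 × ZMod 2) :
    tr (phi ω p * conj (phi ω q)) = aM (p.1 * q.2 + p.2 * q.1) := by
  rw [conj_phi hω, mul_phi hω, tr_phi hω]
  exact congrArg aM ((by decide :
    ∀ p q : ZMod 2 × ZMod 2, p.1 * q.2 + p.2 * (q.1 + q.2) + p.2 * q.2 = p.1 * q.2 + p.2 * q.1) p q)

end Omega

noncomputable def Lfun (ω : F4) (v : Fin 12 → ZMod 2) : Fin 12 → F4 :=
  fun j => phi ω (amap v j, bmap v j)

noncomputable def gfun (ω : F4) (i : Fin 12) : Fin 12 → F4 :=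
  fun j => phi ω (GA i j, GB i j)

section Omega2

variable {ω : F4} (hω : ω ^ 2 = ω + 1)

lemma sum_smul_gfun (v : Fin 12 → ZMod 2) : (∑ i, v i • gfun ω i) = Lfun ω v := by
  funext j
  have h1 : ∀ i : Fin 12, (v i • gfun ω i) j = aM (v i * GA i j) + aM (v i * GB i j) * ω := by
    intro i
    simp only [Pi.smul_apply, gfun, phi, aM, Algebra.smul_def, map_mul]
    ring
  rw [Finset.sum_apply, Finset.sum_congr rfl fun i _ => h1 i, Finset.sum_add_distrib,
    ← Finset.sum_mul, ← map_sum, ← map_sum]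
  rfl




lemma phi00 : phi ω ((0:ZMod 2), (0:ZMod 2)) = 0 := by simp [phi, aM]
lemma phi10 : phi ω ((1:ZMod 2), (0:ZMod 2)) = 1 := by simp [phi, aM]
lemma phi01 : phi ω ((0:ZMod 2), (1:ZMod 2)) = ω := by simp [phi, aM]
lemma phi11 (hw : ω ^ 2 = ω + 1) : phi ω ((1:ZMod 2), (1:ZMod 2)) = ω ^ 2 := by
  rw [hw]; simp [phi, aM, add_comm]

lemma gfun_eq0 : gfun ω 0 = ![0,0,0,0,0,0,1,1,1,1,1,1] := by
  funext j
  fin_cases j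
  · show phi ω (GA 0 0, GB 0 0) = 0
    rw [(by decide : (GA 0 0, GB 0 0) = ((0:ZMod 2),(0:ZMod 2)))]
    exact phi00
  · show phi ω (GA 0 1, GB 0 1) = 0
    rw [(by decide : (GA 0 1, GB 0 1) = ((0:ZMod 2),(0:ZMod 2)))]
    exact phi00
  · show phi ω (GA 0 2, GB 0 2) = 0
    rw [(by decide : (GA 0 2, GB 0 2) = ((0:ZMod 2),(0:ZMod 2)))]
    exact phi00
  · show phi ω (GA 0 3, GB 0 3) = 0
    rw [(by decide : (GA 0 3, GB 0 3) = ((0:ZMod 2),(0:ZMod 2)))]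
    exact phi00
  · show phi ω (GA 0 4, GB 0 4) = 0
    rw [(by decide : (GA 0 4, GB 0 4) = ((0:ZMod 2),(0:ZMod 2)))]
    exact phi00
  · show phi ω (GA 0 5, GB 0 5) = 0
    rw [(by decide : (GA 0 5, GB 0 5) = ((0:ZMod 2),(0:ZMod 2)))]
    exact phi00
  · show phi ω (GA 0 6, GB 0 6) = 1
    rw [(by decide : (GA 0 6, GB 0 6) = ((1:ZMod 2),(0:ZMod 2)))]
    exact phi10
  · show phi ω (GA 0 7, GB 0 7) = 1
    rw [(by decide : (GA 0 7, GB 0 7) = ((1:ZMod 2),(0:ZMod 2)))]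
    exact phi10
  · show phi ω (GA 0 8, GB 0 8) = 1
    rw [(by decide : (GA 0 8, GB 0 8) = ((1:ZMod 2),(0:ZMod 2)))]
    exact phi10
  · show phi ω (GA 0 9, GB 0 9) = 1
    rw [(by decide : (GA 0 9, GB 0 9) = ((1:ZMod 2),(0:ZMod 2)))]
    exact phi10
  · show phi ω (GA 0 10, GB 0 10) = 1
    rw [(by decide : (GA 0 10, GB 0 10) = ((1:ZMod 2),(0:ZMod 2)))]
    exact phi10
  · show phi ω (GA 0 11, GB 0 11) = 1
    rw [(by decide : (GA 0 11, GB 0 11) = ((1:ZMod 2),(0:ZMod 2)))]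
    exact phi10
lemma gfun_eq1 : gfun ω 1 = ![0,0,0,0,0,0,ω,ω,ω,ω,ω,ω] := by
  funext j
  fin_cases j
  · show phi ω (GA 1 0, GB 1 0) = 0
    rw [(by decide : (GA 1 0, GB 1 0) = ((0:ZMod 2),(0:ZMod 2)))]
    exact phi00
  · show phi ω (GA 1 1, GB 1 1) = 0
    rw [(by decide : (GA 1 1, GB 1 1) = ((0:ZMod 2),(0:ZMod 2)))]
    exact phi00
  · show phi ω (GA 1 2, GB 1 2) = 0
    rw [(by decide : (GA 1 2, GB 1 2) = ((0:ZMod 2),(0:ZMod 2)))]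
    exact phi00
  · show phi ω (GA 1 3, GB 1 3) = 0
    rw [(by decide : (GA 1 3, GB 1 3) = ((0:ZMod 2),(0:ZMod 2)))]
    exact phi00
  · show phi ω (GA 1 4, GB 1 4) = 0
    rw [(by decide : (GA 1 4, GB 1 4) = ((0:ZMod 2),(0:ZMod 2)))]
    exact phi00
  · show phi ω (GA 1 5, GB 1 5) = 0
    rw [(by decide : (GA 1 5, GB 1 5) = ((0:ZMod 2),(0:ZMod 2)))]
    exact phi00
  · show phi ω (GA 1 6, GB 1 6) = ω
    rw [(by decide : (GA 1 6, GB 1 6) = ((0:ZMod 2),(1:ZMod 2)))]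
    exact phi01
  · show phi ω (GA 1 7, GB 1 7) = ω
    rw [(by decide : (GA 1 7, GB 1 7) = ((0:ZMod 2),(1:ZMod 2)))]
    exact phi01
  · show phi ω (GA 1 8, GB 1 8) = ω
    rw [(by decide : (GA 1 8, GB 1 8) = ((0:ZMod 2),(1:ZMod 2)))]
    exact phi01
  · show phi ω (GA 1 9, GB 1 9) = ω
    rw [(by decide : (GA 1 9, GB 1 9) = ((0:ZMod 2),(1:ZMod 2)))]
    exact phi01
  · show phi ω (GA 1 10, GB 1 10) = ω
    rw [(by decide : (GA 1 10, GB 1 10) = ((0:ZMod 2),(1:ZMod 2)))]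
    exact phi01
  · show phi ω (GA 1 11, GB 1 11) = ω
    rw [(by decide : (GA 1 11, GB 1 11) = ((0:ZMod 2),(1:ZMod 2)))]
    exact phi01
lemma gfun_eq2 : gfun ω 2 = ![1,1,1,1,1,1,0,0,0,0,0,0] := by
  funext j
  fin_cases j
  · show phi ω (GA 2 0, GB 2 0) = 1
    rw [(by decide : (GA 2 0, GB 2 0) = ((1:ZMod 2),(0:ZMod 2)))]
    exact phi10
  · show phi ω (GA 2 1, GB 2 1) = 1
    rw [(by decide : (GA 2 1, GB 2 1) = ((1:ZMod 2),(0:ZMod 2)))]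
    exact phi10
  · show phi ω (GA 2 2, GB 2 2) = 1
    rw [(by decide : (GA 2 2, GB 2 2) = ((1:ZMod 2),(0:ZMod 2)))]
    exact phi10
  · show phi ω (GA 2 3, GB 2 3) = 1
    rw [(by decide : (GA 2 3, GB 2 3) = ((1:ZMod 2),(0:ZMod 2)))]
    exact phi10
  · show phi ω (GA 2 4, GB 2 4) = 1
    rw [(by decide : (GA 2 4, GB 2 4) = ((1:ZMod 2),(0:ZMod 2)))]
    exact phi10
  · show phi ω (GA 2 5, GB 2 5) = 1
    rw [(by decide : (GA 2 5, GB 2 5) = ((1:ZMod 2),(0:ZMod 2)))]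
    exact phi10
  · show phi ω (GA 2 6, GB 2 6) = 0
    rw [(by decide : (GA 2 6, GB 2 6) = ((0:ZMod 2),(0:ZMod 2)))]
    exact phi00
  · show phi ω (GA 2 7, GB 2 7) = 0
    rw [(by decide : (GA 2 7, GB 2 7) = ((0:ZMod 2),(0:ZMod 2)))]
    exact phi00
  · show phi ω (GA 2 8, GB 2 8) = 0
    rw [(by decide : (GA 2 8, GB 2 8) = ((0:ZMod 2),(0:ZMod 2)))]
    exact phi00
  · show phi ω (GA 2 9, GB 2 9) = 0
    rw [(by decide : (GA 2 9, GB 2 9) = ((0:ZMod 2),(0:ZMod 2)))]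
    exact phi00
  · show phi ω (GA 2 10, GB 2 10) = 0
    rw [(by decide : (GA 2 10, GB 2 10) = ((0:ZMod 2),(0:ZMod 2)))]
    exact phi00
  · show phi ω (GA 2 11, GB 2 11) = 0
    rw [(by decide : (GA 2 11, GB 2 11) = ((0:ZMod 2),(0:ZMod 2)))]
    exact phi00
lemma gfun_eq3 : gfun ω 3 = ![ω,ω,ω,ω,ω,ω,0,0,0,0,0,0] := by
  funext j
  fin_cases j
  · show phi ω (GA 3 0, GB 3 0) = ω
    rw [(by decide : (GA 3 0, GB 3 0) = ((0:ZMod 2),(1:ZMod 2)))]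
    exact phi01
  · show phi ω (GA 3 1, GB 3 1) = ω
    rw [(by decide : (GA 3 1, GB 3 1) = ((0:ZMod 2),(1:ZMod 2)))]
    exact phi01
  · show phi ω (GA 3 2, GB 3 2) = ω
    rw [(by decide : (GA 3 2, GB 3 2) = ((0:ZMod 2),(1:ZMod 2)))]
    exact phi01
  · show phi ω (GA 3 3, GB 3 3) = ω
    rw [(by decide : (GA 3 3, GB 3 3) = ((0:ZMod 2),(1:ZMod 2)))]
    exact phi01
  · show phi ω (GA 3 4, GB 3 4) = ω
    rw [(by decide : (GA 3 4, GB 3 4) = ((0:ZMod 2),(1:ZMod 2)))]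
    exact phi01
  · show phi ω (GA 3 5, GB 3 5) = ω
    rw [(by decide : (GA 3 5, GB 3 5) = ((0:ZMod 2),(1:ZMod 2)))]
    exact phi01
  · show phi ω (GA 3 6, GB 3 6) = 0
    rw [(by decide : (GA 3 6, GB 3 6) = ((0:ZMod 2),(0:ZMod 2)))]
    exact phi00
  · show phi ω (GA 3 7, GB 3 7) = 0
    rw [(by decide : (GA 3 7, GB 3 7) = ((0:ZMod 2),(0:ZMod 2)))]
    exact phi00
  · show phi ω (GA 3 8, GB 3 8) = 0
    rw [(by decide : (GA 3 8, GB 3 8) = ((0:ZMod 2),(0:ZMod 2)))]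
    exact phi00
  · show phi ω (GA 3 9, GB 3 9) = 0
    rw [(by decide : (GA 3 9, GB 3 9) = ((0:ZMod 2),(0:ZMod 2)))]
    exact phi00
  · show phi ω (GA 3 10, GB 3 10) = 0
    rw [(by decide : (GA 3 10, GB 3 10) = ((0:ZMod 2),(0:ZMod 2)))]
    exact phi00
  · show phi ω (GA 3 11, GB 3 11) = 0
    rw [(by decide : (GA 3 11, GB 3 11) = ((0:ZMod 2),(0:ZMod 2)))]
    exact phi00
include hω in
lemma gfun_eq4 : gfun ω 4 = ![0,0,0,1,ω,ω^2,0,0,0,1,ω,ω^2] := by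
  funext j
  fin_cases j
  · show phi ω (GA 4 0, GB 4 0) = 0
    rw [(by decide : (GA 4 0, GB 4 0) = ((0:ZMod 2),(0:ZMod 2)))]
    exact phi00
  · show phi ω (GA 4 1, GB 4 1) = 0
    rw [(by decide : (GA 4 1, GB 4 1) = ((0:ZMod 2),(0:ZMod 2)))]
    exact phi00
  · show phi ω (GA 4 2, GB 4 2) = 0
    rw [(by decide : (GA 4 2, GB 4 2) = ((0:ZMod 2),(0:ZMod 2)))]
    exact phi00
  · show phi ω (GA 4 3, GB 4 3) = 1
    rw [(by decide : (GA 4 3, GB 4 3) = ((1:ZMod 2),(0:ZMod 2)))]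
    exact phi10
  · show phi ω (GA 4 4, GB 4 4) = ω
    rw [(by decide : (GA 4 4, GB 4 4) = ((0:ZMod 2),(1:ZMod 2)))]
    exact phi01
  · show phi ω (GA 4 5, GB 4 5) = ω^2
    rw [(by decide : (GA 4 5, GB 4 5) = ((1:ZMod 2),(1:ZMod 2)))]
    exact phi11 hω
  · show phi ω (GA 4 6, GB 4 6) = 0
    rw [(by decide : (GA 4 6, GB 4 6) = ((0:ZMod 2),(0:ZMod 2)))]
    exact phi00
  · show phi ω (GA 4 7, GB 4 7) = 0
    rw [(by decide : (GA 4 7, GB 4 7) = ((0:ZMod 2),(0:ZMod 2)))]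
    exact phi00
  · show phi ω (GA 4 8, GB 4 8) = 0
    rw [(by decide : (GA 4 8, GB 4 8) = ((0:ZMod 2),(0:ZMod 2)))]
    exact phi00
  · show phi ω (GA 4 9, GB 4 9) = 1
    rw [(by decide : (GA 4 9, GB 4 9) = ((1:ZMod 2),(0:ZMod 2)))]
    exact phi10
  · show phi ω (GA 4 10, GB 4 10) = ω
    rw [(by decide : (GA 4 10, GB 4 10) = ((0:ZMod 2),(1:ZMod 2)))]
    exact phi01
  · show phi ω (GA 4 11, GB 4 11) = ω^2
    rw [(by decide : (GA 4 11, GB 4 11) = ((1:ZMod 2),(1:ZMod 2)))]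
    exact phi11 hω
include hω in
lemma gfun_eq5 : gfun ω 5 = ![0,0,0,ω,ω^2,1,0,0,0,ω,ω^2,1] := by
  funext j
  fin_cases j
  · show phi ω (GA 5 0, GB 5 0) = 0
    rw [(by decide : (GA 5 0, GB 5 0) = ((0:ZMod 2),(0:ZMod 2)))]
    exact phi00
  · show phi ω (GA 5 1, GB 5 1) = 0
    rw [(by decide : (GA 5 1, GB 5 1) = ((0:ZMod 2),(0:ZMod 2)))]
    exact phi00
  · show phi ω (GA 5 2, GB 5 2) = 0
    rw [(by decide : (GA 5 2, GB 5 2) = ((0:ZMod 2),(0:ZMod 2)))]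
    exact phi00
  · show phi ω (GA 5 3, GB 5 3) = ω
    rw [(by decide : (GA 5 3, GB 5 3) = ((0:ZMod 2),(1:ZMod 2)))]
    exact phi01
  · show phi ω (GA 5 4, GB 5 4) = ω^2
    rw [(by decide : (GA 5 4, GB 5 4) = ((1:ZMod 2),(1:ZMod 2)))]
    exact phi11 hω
  · show phi ω (GA 5 5, GB 5 5) = 1
    rw [(by decide : (GA 5 5, GB 5 5) = ((1:ZMod 2),(0:ZMod 2)))]
    exact phi10
  · show phi ω (GA 5 6, GB 5 6) = 0
    rw [(by decide : (GA 5 6, GB 5 6) = ((0:ZMod 2),(0:ZMod 2)))]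
    exact phi00
  · show phi ω (GA 5 7, GB 5 7) = 0
    rw [(by decide : (GA 5 7, GB 5 7) = ((0:ZMod 2),(0:ZMod 2)))]
    exact phi00
  · show phi ω (GA 5 8, GB 5 8) = 0
    rw [(by decide : (GA 5 8, GB 5 8) = ((0:ZMod 2),(0:ZMod 2)))]
    exact phi00
  · show phi ω (GA 5 9, GB 5 9) = ω
    rw [(by decide : (GA 5 9, GB 5 9) = ((0:ZMod 2),(1:ZMod 2)))]
    exact phi01
  · show phi ω (GA 5 10, GB 5 10) = ω^2
    rw [(by decide : (GA 5 10, GB 5 10) = ((1:ZMod 2),(1:ZMod 2)))]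
    exact phi11 hω
  · show phi ω (GA 5 11, GB 5 11) = 1
    rw [(by decide : (GA 5 11, GB 5 11) = ((1:ZMod 2),(0:ZMod 2)))]
    exact phi10
include hω in
lemma gfun_eq6 : gfun ω 6 = ![1,ω^2,ω,0,0,0,1,ω^2,ω,0,0,0] := by
  funext j
  fin_cases j
  · show phi ω (GA 6 0, GB 6 0) = 1
    rw [(by decide : (GA 6 0, GB 6 0) = ((1:ZMod 2),(0:ZMod 2)))]
    exact phi10
  · show phi ω (GA 6 1, GB 6 1) = ω^2
    rw [(by decide : (GA 6 1, GB 6 1) = ((1:ZMod 2),(1:ZMod 2)))]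
    exact phi11 hω
  · show phi ω (GA 6 2, GB 6 2) = ω
    rw [(by decide : (GA 6 2, GB 6 2) = ((0:ZMod 2),(1:ZMod 2)))]
    exact phi01
  · show phi ω (GA 6 3, GB 6 3) = 0
    rw [(by decide : (GA 6 3, GB 6 3) = ((0:ZMod 2),(0:ZMod 2)))]
    exact phi00
  · show phi ω (GA 6 4, GB 6 4) = 0
    rw [(by decide : (GA 6 4, GB 6 4) = ((0:ZMod 2),(0:ZMod 2)))]
    exact phi00
  · show phi ω (GA 6 5, GB 6 5) = 0
    rw [(by decide : (GA 6 5, GB 6 5) = ((0:ZMod 2),(0:ZMod 2)))]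
    exact phi00
  · show phi ω (GA 6 6, GB 6 6) = 1
    rw [(by decide : (GA 6 6, GB 6 6) = ((1:ZMod 2),(0:ZMod 2)))]
    exact phi10
  · show phi ω (GA 6 7, GB 6 7) = ω^2
    rw [(by decide : (GA 6 7, GB 6 7) = ((1:ZMod 2),(1:ZMod 2)))]
    exact phi11 hω
  · show phi ω (GA 6 8, GB 6 8) = ω
    rw [(by decide : (GA 6 8, GB 6 8) = ((0:ZMod 2),(1:ZMod 2)))]
    exact phi01
  · show phi ω (GA 6 9, GB 6 9) = 0
    rw [(by decide : (GA 6 9, GB 6 9) = ((0:ZMod 2),(0:ZMod 2)))]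
    exact phi00
  · show phi ω (GA 6 10, GB 6 10) = 0
    rw [(by decide : (GA 6 10, GB 6 10) = ((0:ZMod 2),(0:ZMod 2)))]
    exact phi00
  · show phi ω (GA 6 11, GB 6 11) = 0
    rw [(by decide : (GA 6 11, GB 6 11) = ((0:ZMod 2),(0:ZMod 2)))]
    exact phi00
include hω in
lemma gfun_eq7 : gfun ω 7 = ![ω,1,ω^2,0,0,0,ω,1,ω^2,0,0,0] := by
  funext j
  fin_cases j
  · show phi ω (GA 7 0, GB 7 0) = ω
    rw [(by decide : (GA 7 0, GB 7 0) = ((0:ZMod 2),(1:ZMod 2)))]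
    exact phi01
  · show phi ω (GA 7 1, GB 7 1) = 1
    rw [(by decide : (GA 7 1, GB 7 1) = ((1:ZMod 2),(0:ZMod 2)))]
    exact phi10
  · show phi ω (GA 7 2, GB 7 2) = ω^2
    rw [(by decide : (GA 7 2, GB 7 2) = ((1:ZMod 2),(1:ZMod 2)))]
    exact phi11 hω
  · show phi ω (GA 7 3, GB 7 3) = 0
    rw [(by decide : (GA 7 3, GB 7 3) = ((0:ZMod 2),(0:ZMod 2)))]
    exact phi00
  · show phi ω (GA 7 4, GB 7 4) = 0
    rw [(by decide : (GA 7 4, GB 7 4) = ((0:ZMod 2),(0:ZMod 2)))]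
    exact phi00
  · show phi ω (GA 7 5, GB 7 5) = 0
    rw [(by decide : (GA 7 5, GB 7 5) = ((0:ZMod 2),(0:ZMod 2)))]
    exact phi00
  · show phi ω (GA 7 6, GB 7 6) = ω
    rw [(by decide : (GA 7 6, GB 7 6) = ((0:ZMod 2),(1:ZMod 2)))]
    exact phi01
  · show phi ω (GA 7 7, GB 7 7) = 1
    rw [(by decide : (GA 7 7, GB 7 7) = ((1:ZMod 2),(0:ZMod 2)))]
    exact phi10
  · show phi ω (GA 7 8, GB 7 8) = ω^2
    rw [(by decide : (GA 7 8, GB 7 8) = ((1:ZMod 2),(1:ZMod 2)))]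
    exact phi11 hω
  · show phi ω (GA 7 9, GB 7 9) = 0
    rw [(by decide : (GA 7 9, GB 7 9) = ((0:ZMod 2),(0:ZMod 2)))]
    exact phi00
  · show phi ω (GA 7 10, GB 7 10) = 0
    rw [(by decide : (GA 7 10, GB 7 10) = ((0:ZMod 2),(0:ZMod 2)))]
    exact phi00
  · show phi ω (GA 7 11, GB 7 11) = 0
    rw [(by decide : (GA 7 11, GB 7 11) = ((0:ZMod 2),(0:ZMod 2)))]
    exact phi00
include hω in
lemma gfun_eq8 : gfun ω 8 = ![0,0,0,1,ω^2,ω,ω,ω^2,1,0,0,0] := by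
  funext j
  fin_cases j
  · show phi ω (GA 8 0, GB 8 0) = 0
    rw [(by decide : (GA 8 0, GB 8 0) = ((0:ZMod 2),(0:ZMod 2)))]
    exact phi00
  · show phi ω (GA 8 1, GB 8 1) = 0
    rw [(by decide : (GA 8 1, GB 8 1) = ((0:ZMod 2),(0:ZMod 2)))]
    exact phi00
  · show phi ω (GA 8 2, GB 8 2) = 0
    rw [(by decide : (GA 8 2, GB 8 2) = ((0:ZMod 2),(0:ZMod 2)))]
    exact phi00
  · show phi ω (GA 8 3, GB 8 3) = 1
    rw [(by decide : (GA 8 3, GB 8 3) = ((1:ZMod 2),(0:ZMod 2)))]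
    exact phi10
  · show phi ω (GA 8 4, GB 8 4) = ω^2
    rw [(by decide : (GA 8 4, GB 8 4) = ((1:ZMod 2),(1:ZMod 2)))]
    exact phi11 hω
  · show phi ω (GA 8 5, GB 8 5) = ω
    rw [(by decide : (GA 8 5, GB 8 5) = ((0:ZMod 2),(1:ZMod 2)))]
    exact phi01
  · show phi ω (GA 8 6, GB 8 6) = ω
    rw [(by decide : (GA 8 6, GB 8 6) = ((0:ZMod 2),(1:ZMod 2)))]
    exact phi01
  · show phi ω (GA 8 7, GB 8 7) = ω^2
    rw [(by decide : (GA 8 7, GB 8 7) = ((1:ZMod 2),(1:ZMod 2)))]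
    exact phi11 hω
  · show phi ω (GA 8 8, GB 8 8) = 1
    rw [(by decide : (GA 8 8, GB 8 8) = ((1:ZMod 2),(0:ZMod 2)))]
    exact phi10
  · show phi ω (GA 8 9, GB 8 9) = 0
    rw [(by decide : (GA 8 9, GB 8 9) = ((0:ZMod 2),(0:ZMod 2)))]
    exact phi00
  · show phi ω (GA 8 10, GB 8 10) = 0
    rw [(by decide : (GA 8 10, GB 8 10) = ((0:ZMod 2),(0:ZMod 2)))]
    exact phi00
  · show phi ω (GA 8 11, GB 8 11) = 0
    rw [(by decide : (GA 8 11, GB 8 11) = ((0:ZMod 2),(0:ZMod 2)))]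
    exact phi00
include hω in
lemma gfun_eq9 : gfun ω 9 = ![0,0,0,ω,1,ω^2,1,ω,ω^2,0,0,0] := by
  funext j
  fin_cases j
  · show phi ω (GA 9 0, GB 9 0) = 0
    rw [(by decide : (GA 9 0, GB 9 0) = ((0:ZMod 2),(0:ZMod 2)))]
    exact phi00
  · show phi ω (GA 9 1, GB 9 1) = 0
    rw [(by decide : (GA 9 1, GB 9 1) = ((0:ZMod 2),(0:ZMod 2)))]
    exact phi00
  · show phi ω (GA 9 2, GB 9 2) = 0
    rw [(by decide : (GA 9 2, GB 9 2) = ((0:ZMod 2),(0:ZMod 2)))]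
    exact phi00
  · show phi ω (GA 9 3, GB 9 3) = ω
    rw [(by decide : (GA 9 3, GB 9 3) = ((0:ZMod 2),(1:ZMod 2)))]
    exact phi01
  · show phi ω (GA 9 4, GB 9 4) = 1
    rw [(by decide : (GA 9 4, GB 9 4) = ((1:ZMod 2),(0:ZMod 2)))]
    exact phi10
  · show phi ω (GA 9 5, GB 9 5) = ω^2
    rw [(by decide : (GA 9 5, GB 9 5) = ((1:ZMod 2),(1:ZMod 2)))]
    exact phi11 hω
  · show phi ω (GA 9 6, GB 9 6) = 1
    rw [(by decide : (GA 9 6, GB 9 6) = ((1:ZMod 2),(0:ZMod 2)))]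
    exact phi10
  · show phi ω (GA 9 7, GB 9 7) = ω
    rw [(by decide : (GA 9 7, GB 9 7) = ((0:ZMod 2),(1:ZMod 2)))]
    exact phi01
  · show phi ω (GA 9 8, GB 9 8) = ω^2
    rw [(by decide : (GA 9 8, GB 9 8) = ((1:ZMod 2),(1:ZMod 2)))]
    exact phi11 hω
  · show phi ω (GA 9 9, GB 9 9) = 0
    rw [(by decide : (GA 9 9, GB 9 9) = ((0:ZMod 2),(0:ZMod 2)))]
    exact phi00
  · show phi ω (GA 9 10, GB 9 10) = 0
    rw [(by decide : (GA 9 10, GB 9 10) = ((0:ZMod 2),(0:ZMod 2)))]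
    exact phi00
  · show phi ω (GA 9 11, GB 9 11) = 0
    rw [(by decide : (GA 9 11, GB 9 11) = ((0:ZMod 2),(0:ZMod 2)))]
    exact phi00
include hω in
lemma gfun_eq10 : gfun ω 10 = ![1,ω,ω^2,0,0,0,0,0,0,ω^2,ω,1] := by
  funext j
  fin_cases j
  · show phi ω (GA 10 0, GB 10 0) = 1
    rw [(by decide : (GA 10 0, GB 10 0) = ((1:ZMod 2),(0:ZMod 2)))]
    exact phi10
  · show phi ω (GA 10 1, GB 10 1) = ω
    rw [(by decide : (GA 10 1, GB 10 1) = ((0:ZMod 2),(1:ZMod 2)))]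
    exact phi01
  · show phi ω (GA 10 2, GB 10 2) = ω^2
    rw [(by decide : (GA 10 2, GB 10 2) = ((1:ZMod 2),(1:ZMod 2)))]
    exact phi11 hω
  · show phi ω (GA 10 3, GB 10 3) = 0
    rw [(by decide : (GA 10 3, GB 10 3) = ((0:ZMod 2),(0:ZMod 2)))]
    exact phi00
  · show phi ω (GA 10 4, GB 10 4) = 0
    rw [(by decide : (GA 10 4, GB 10 4) = ((0:ZMod 2),(0:ZMod 2)))]
    exact phi00
  · show phi ω (GA 10 5, GB 10 5) = 0
    rw [(by decide : (GA 10 5, GB 10 5) = ((0:ZMod 2),(0:ZMod 2)))]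
    exact phi00
  · show phi ω (GA 10 6, GB 10 6) = 0
    rw [(by decide : (GA 10 6, GB 10 6) = ((0:ZMod 2),(0:ZMod 2)))]
    exact phi00
  · show phi ω (GA 10 7, GB 10 7) = 0
    rw [(by decide : (GA 10 7, GB 10 7) = ((0:ZMod 2),(0:ZMod 2)))]
    exact phi00
  · show phi ω (GA 10 8, GB 10 8) = 0
    rw [(by decide : (GA 10 8, GB 10 8) = ((0:ZMod 2),(0:ZMod 2)))]
    exact phi00
  · show phi ω (GA 10 9, GB 10 9) = ω^2
    rw [(by decide : (GA 10 9, GB 10 9) = ((1:ZMod 2),(1:ZMod 2)))]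
    exact phi11 hω
  · show phi ω (GA 10 10, GB 10 10) = ω
    rw [(by decide : (GA 10 10, GB 10 10) = ((0:ZMod 2),(1:ZMod 2)))]
    exact phi01
  · show phi ω (GA 10 11, GB 10 11) = 1
    rw [(by decide : (GA 10 11, GB 10 11) = ((1:ZMod 2),(0:ZMod 2)))]
    exact phi10
include hω in
lemma gfun_eq11 : gfun ω 11 = ![ω^2,1,ω,0,0,0,0,0,0,1,ω^2,ω] := by
  funext j
  fin_cases j
  · show phi ω (GA 11 0, GB 11 0) = ω^2
    rw [(by decide : (GA 11 0, GB 11 0) = ((1:ZMod 2),(1:ZMod 2)))]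
    exact phi11 hω
  · show phi ω (GA 11 1, GB 11 1) = 1
    rw [(by decide : (GA 11 1, GB 11 1) = ((1:ZMod 2),(0:ZMod 2)))]
    exact phi10
  · show phi ω (GA 11 2, GB 11 2) = ω
    rw [(by decide : (GA 11 2, GB 11 2) = ((0:ZMod 2),(1:ZMod 2)))]
    exact phi01
  · show phi ω (GA 11 3, GB 11 3) = 0
    rw [(by decide : (GA 11 3, GB 11 3) = ((0:ZMod 2),(0:ZMod 2)))]
    exact phi00
  · show phi ω (GA 11 4, GB 11 4) = 0
    rw [(by decide : (GA 11 4, GB 11 4) = ((0:ZMod 2),(0:ZMod 2)))]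
    exact phi00
  · show phi ω (GA 11 5, GB 11 5) = 0
    rw [(by decide : (GA 11 5, GB 11 5) = ((0:ZMod 2),(0:ZMod 2)))]
    exact phi00
  · show phi ω (GA 11 6, GB 11 6) = 0
    rw [(by decide : (GA 11 6, GB 11 6) = ((0:ZMod 2),(0:ZMod 2)))]
    exact phi00
  · show phi ω (GA 11 7, GB 11 7) = 0
    rw [(by decide : (GA 11 7, GB 11 7) = ((0:ZMod 2),(0:ZMod 2)))]
    exact phi00
  · show phi ω (GA 11 8, GB 11 8) = 0
    rw [(by decide : (GA 11 8, GB 11 8) = ((0:ZMod 2),(0:ZMod 2)))]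
    exact phi00
  · show phi ω (GA 11 9, GB 11 9) = 1
    rw [(by decide : (GA 11 9, GB 11 9) = ((1:ZMod 2),(0:ZMod 2)))]
    exact phi10
  · show phi ω (GA 11 10, GB 11 10) = ω^2
    rw [(by decide : (GA 11 10, GB 11 10) = ((1:ZMod 2),(1:ZMod 2)))]
    exact phi11 hω
  · show phi ω (GA 11 11, GB 11 11) = ω
    rw [(by decide : (GA 11 11, GB 11 11) = ((0:ZMod 2),(1:ZMod 2)))]
    exact phi01

include hω in
lemma mem_code {c : Fin 12 → F4} : c ∈ dodecacode ω ↔ ∃ v : Fin 12 → ZMod 2, Lfun ω v = c := by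
  have e0 := gfun_eq0 (ω := ω); have e1 := gfun_eq1 (ω := ω); have e2 := gfun_eq2 (ω := ω)
  have e3 := gfun_eq3 (ω := ω); have e4 := gfun_eq4 hω; have e5 := gfun_eq5 hω
  have e6 := gfun_eq6 hω; have e7 := gfun_eq7 hω; have e8 := gfun_eq8 hω
  have e9 := gfun_eq9 hω; have e10 := gfun_eq10 hω; have e11 := gfun_eq11 hω
  have hset : ({![0,0,0,0,0,0,1,1,1,1,1,1],
      ![0,0,0,0,0,0,ω,ω,ω,ω,ω,ω],
      ![1,1,1,1,1,1,0,0,0,0,0,0],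
      ![ω,ω,ω,ω,ω,ω,0,0,0,0,0,0],
      ![0,0,0,1,ω,ω^2,0,0,0,1,ω,ω^2],
      ![0,0,0,ω,ω^2,1,0,0,0,ω,ω^2,1],
      ![1,ω^2,ω,0,0,0,1,ω^2,ω,0,0,0],
      ![ω,1,ω^2,0,0,0,ω,1,ω^2,0,0,0],
      ![0,0,0,1,ω^2,ω,ω,ω^2,1,0,0,0],
      ![0,0,0,ω,1,ω^2,1,ω,ω^2,0,0,0],
      ![1,ω,ω^2,0,0,0,0,0,0,ω^2,ω,1],
      ![ω^2,1,ω,0,0,0,0,0,0,1,ω^2,ω]} : Set (Fin 12 → F4)) = Set.range (gfun ω) := by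
    ext x
    simp only [Set.mem_insert_iff, Set.mem_singleton_iff, Set.mem_range]
    constructor
    · rintro (rfl | rfl | rfl | rfl | rfl | rfl | rfl | rfl | rfl | rfl | rfl | rfl)
      exacts [⟨0, e0⟩, ⟨1, e1⟩, ⟨2, e2⟩, ⟨3, e3⟩, ⟨4, e4⟩, ⟨5, e5⟩, ⟨6, e6⟩, ⟨7, e7⟩,
        ⟨8, e8⟩, ⟨9, e9⟩, ⟨10, e10⟩, ⟨11, e11⟩]
    · rintro ⟨i, rfl⟩
      fin_cases i
      · exact Or.inl e0
      · exact Or.inr (Or.inl e1)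
      · exact Or.inr (Or.inr (Or.inl e2))
      · exact Or.inr (Or.inr (Or.inr (Or.inl e3)))
      · exact Or.inr (Or.inr (Or.inr (Or.inr (Or.inl e4))))
      · exact Or.inr (Or.inr (Or.inr (Or.inr (Or.inr (Or.inl e5)))))
      · exact Or.inr (Or.inr (Or.inr (Or.inr (Or.inr (Or.inr (Or.inl e6))))))
      · exact Or.inr (Or.inr (Or.inr (Or.inr (Or.inr (Or.inr (Or.inr (Or.inl e7)))))))
      · exact Or.inr (Or.inr (Or.inr (Or.inr (Or.inr (Or.inr (Or.inr (Or.inr (Or.inl e8))))))))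
      · exact Or.inr (Or.inr (Or.inr (Or.inr (Or.inr (Or.inr (Or.inr (Or.inr (Or.inr (Or.inl e9)))))))))
      · exact Or.inr (Or.inr (Or.inr (Or.inr (Or.inr (Or.inr (Or.inr (Or.inr (Or.inr (Or.inr (Or.inl e10))))))))))
      · exact Or.inr (Or.inr (Or.inr (Or.inr (Or.inr (Or.inr (Or.inr (Or.inr (Or.inr (Or.inr (Or.inr e11))))))))))
  simp only [dodecacode]
  rw [hset, Submodule.mem_span_range_iff_exists_fun]
  exact exists_congr fun v => by rw [sum_smul_gfun]

include hω in
lemma wt_Lfun (v : Fin 12 → ZMod 2) : wt (Lfun ω v) = wcount v := by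
  have hiff : ∀ j : Fin 12, Lfun ω v j ≠ 0 ↔ ¬(amap v j = 0 ∧ bmap v j = 0) := by
    intro j
    rw [not_iff_not]
    constructor
    · intro h
      have hp := phi_eq_zero hω h
      exact ⟨congrArg Prod.fst hp, congrArg Prod.snd hp⟩
    · rintro ⟨h1, h2⟩
      show phi ω _ = 0
      rw [show (amap v j, bmap v j) = ((0 : ZMod 2), (0 : ZMod 2)) from by rw [h1, h2]]
      simp [phi]
  rw [wt, show {j | Lfun ω v j ≠ 0} =
      ↑(univ.filter fun j : Fin 12 => ¬(amap v j = 0 ∧ bmap v j = 0)) from by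
    ext j; simp only [Set.mem_setOf_eq, coe_filter, mem_univ, true_and]; exact hiff j,
    Set.ncard_coe_finset]
  rfl

include hω in
lemma Lfun_inj : Function.Injective (Lfun ω) := by
  intro v w h
  have hav : ∀ j, amap v j = amap w j ∧ bmap v j = bmap w j := by
    intro j
    have hc := phi_inj hω (congrFun h j)
    exact ⟨congrArg Prod.fst hc, congrArg Prod.snd hc⟩
  funext i'
  rw [← leftinv v i', ← leftinv w i']
  exact Finset.sum_congr rfl fun j _ => by rw [(hav j).1, (hav j).2]

lemma gfun_single (i : Fin 12) : Lfun ω (Pi.single i 1) = gfun ω i := by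
  funext j
  show phi ω (amap (Pi.single i 1) j, bmap (Pi.single i 1) j) = phi ω (GA i j, GB i j)
  rw [show amap (Pi.single i 1) j = GA i j from by
      simp [amap, Pi.single_apply, ite_mul, Finset.sum_ite_eq],
    show bmap (Pi.single i 1) j = GB i j from by
      simp [bmap, Pi.single_apply, ite_mul, Finset.sum_ite_eq]]

lemma Lfun_zero_of_wcount (v : Fin 12 → ZMod 2) (h0 : wcount v = 0) : Lfun ω v = 0 := by
  funext j
  have hem := Finset.filter_eq_empty_iff.mp (Finset.card_eq_zero.mp h0) (Finset.mem_univ j)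
  obtain ⟨h1, h2⟩ := not_not.mp hem
  show phi ω (amap v j, bmap v j) = 0
  rw [show (amap v j, bmap v j) = ((0 : ZMod 2), (0 : ZMod 2)) from by rw [h1, h2]]
  simp [phi]

end Omega2

set_option maxHeartbeats 2000000 in
/-- The dodecacode has `2¹²` codewords, is self-dual for the trace inner product, has
only even-weight codewords, and its weight distribution is `A₆ = 396`, `A₈ = 1485`,
`A₁₀ = 1980`, `A₁₂ = 234` with no nonzero codewords of other weights; in particular its
minimum weight is 6. -/
theorem dodecacode_weight_distribution (ω : F4) (hω : ω ^ 2 = ω + 1) :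
    Nat.card (dodecacode ω) = 2 ^ 12 ∧
    (dodecacode ω : Set (Fin 12 → F4)) = traceDual (dodecacode ω : Set (Fin 12 → F4)) ∧
    (∀ c ∈ dodecacode ω, Even (wt c)) ∧
    {c : Fin 12 → F4 | c ∈ dodecacode ω ∧ wt c = 6}.ncard = 396 ∧
    {c : Fin 12 → F4 | c ∈ dodecacode ω ∧ wt c = 8}.ncard = 1485 ∧
    {c : Fin 12 → F4 | c ∈ dodecacode ω ∧ wt c = 10}.ncard = 1980 ∧
    {c : Fin 12 → F4 | c ∈ dodecacode ω ∧ wt c = 12}.ncard = 234 ∧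
    (∀ c ∈ dodecacode ω, c ≠ 0 → wt c = 6 ∨ wt c = 8 ∨ wt c = 10 ∨ wt c = 12) ∧
    (∀ c ∈ dodecacode ω, c ≠ 0 → 6 ≤ wt c) := by
  have hmem : ∀ c : Fin 12 → F4, c ∈ dodecacode ω ↔ ∃ v, Lfun ω v = c := fun c => mem_code hω
  have hinj : Function.Injective (Lfun ω) := Lfun_inj hω
  have hcount : ∀ (k N : ℕ),
      (∑ hi : Fin 64, ∑ lo : Fin 64, if fw (hi, lo) = k then 1 else 0) = N →
      {c : Fin 12 → F4 | c ∈ dodecacode ω ∧ wt c = k}.ncard = N := by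
    intro k N hN
    have hset : {c : Fin 12 → F4 | c ∈ dodecacode ω ∧ wt c = k} =
        Lfun ω '' {v : Fin 12 → ZMod 2 | wcount v = k} := by
      ext c
      constructor
      · rintro ⟨hc, hw⟩
        obtain ⟨v, rfl⟩ := (hmem c).mp hc
        exact ⟨v, by rw [Set.mem_setOf_eq, ← wt_Lfun hω v]; exact hw, rfl⟩
      · rintro ⟨v, hv, rfl⟩
        exact ⟨(hmem _).mpr ⟨v, rfl⟩, by rw [wt_Lfun hω]; exact hv⟩
    rw [hset, Set.ncard_image_of_injective _ hinj,
      show {v : Fin 12 → ZMod 2 | wcount v = k} =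
        ↑(univ.filter fun v : Fin 12 → ZMod 2 => wcount v = k) from by ext v; simp,
      Set.ncard_coe_finset, Finset.card_filter,
      ← Function.Bijective.sum_comp dec2_bij (fun v => if wcount v = k then (1:ℕ) else 0),
      Fintype.sum_prod_type, ← hN]
    exact Finset.sum_congr rfl fun hi _ => Finset.sum_congr rfl fun lo _ => by
      rw [wcount_dec2]
  have hweights : ∀ c ∈ dodecacode ω, c ≠ 0 →
      wt c = 6 ∨ wt c = 8 ∨ wt c = 10 ∨ wt c = 12 := by
    intro c hc hne
    obtain ⟨v, rfl⟩ := (hmem c).mp hc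
    obtain ⟨⟨hi, lo⟩, rfl⟩ := dec2_bij.2 v
    rw [wt_Lfun hω, wcount_dec2]
    rcases wlist hi lo with h | h | h | h | h
    · exact absurd (Lfun_zero_of_wcount _ (by rw [wcount_dec2]; exact h)) hne
    · exact Or.inl h
    · exact Or.inr (Or.inl h)
    · exact Or.inr (Or.inr (Or.inl h))
    · exact Or.inr (Or.inr (Or.inr h))
  refine ⟨?_, ?_, ?_, hcount 6 396 count6, hcount 8 1485 count8, hcount 10 1980 count10,
    hcount 12 234 count12, hweights, ?_⟩
  · -- cardinality
    have hrange : (dodecacode ω : Set (Fin 12 → F4)) = Set.range (Lfun ω) := by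
      ext c
      simp only [SetLike.mem_coe, Set.mem_range]
      exact hmem c
    calc Nat.card (dodecacode ω) = Nat.card (Set.range (Lfun ω)) :=
          Nat.card_congr (Equiv.setCongr hrange)
      _ = Nat.card (Fin 12 → ZMod 2) := Nat.card_range_of_injective hinj
      _ = 2 ^ 12 := by
          rw [Nat.card_eq_fintype_card, Fintype.card_fun]
          simp
  · -- self-dual
    apply Set.Subset.antisymm
    · intro x hx
      obtain ⟨v, rfl⟩ := (hmem x).mp hx
      intro c hc
      obtain ⟨w, rfl⟩ := (hmem c).mp hc
      have ht : ∀ j : Fin 12, tr (Lfun ω v j * conj (Lfun ω w j)) =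
          aM (amap v j * bmap w j + bmap v j * amap w j) :=
        fun j => trip hω (amap v j, bmap v j) (amap w j, bmap w j)
      rw [Finset.sum_congr rfl fun j _ => ht j, ← map_sum, inner_zero, map_zero]
    · intro x hx
      choose pfun hp using fun j => (phi_bij hω).2 (x j)
      have hgen : ∀ i : Fin 12, gfun ω i ∈ dodecacode ω := by
        intro i
        exact (hmem _).mpr ⟨Pi.single i 1, gfun_single i⟩
      have hd : ∀ i : Fin 12, (∑ j, ((pfun j).1 * GB i j + (pfun j).2 * GA i j)) = 0 := by
        intro i
        have hxg := hx (gfun ω i) (hgen i)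
        have ht : ∀ j : Fin 12, tr (x j * conj (gfun ω i j)) =
            aM ((pfun j).1 * GB i j + (pfun j).2 * GA i j) := by
          intro j
          rw [← hp j]
          exact trip hω (pfun j) (GA i j, GB i j)
        rw [Finset.sum_congr rfl fun j _ => ht j, ← map_sum] at hxg
        have haMinj : Function.Injective aM := aM.injective
        apply haMinj
        rw [hxg, map_zero]
      refine (hmem x).mpr ⟨vrec (fun j => (pfun j).1) (fun j => (pfun j).2), ?_⟩
      funext j
      show phi ω (amap _ j, bmap _ j) = x j
      rw [recover_a _ _ hd j, recover_b _ _ hd j, ← hp j]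
  · -- even
    intro c hc
    by_cases hne : c = 0
    · subst hne
      have : wt (0 : Fin 12 → F4) = 0 := by
        rw [wt]
        convert Set.ncard_empty (Fin 12)
        ext j
        simp
      rw [this]
      exact Even.zero
    · rcases hweights c hc hne with h | h | h | h <;> rw [h] <;> decide
  · -- min weight
    intro c hc hne
    rcases hweights c hc hne with h | h | h | h <;> omega
end
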